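/- arXiv:2102.08806 — 4 statements merged into one kernel-verified Lean document; each statement's English description precedes it below -/
import Mathlib

section
/- Let n ≥ 2 and let γ : I → ℝⁿ be a smooth non-degenerate curve on a compact interval I, with Frenet frame (e₁(s), …, e_n(s)). Then there is a constant C = C(γ, n) such that for all indices 1 ≤ i, j ≤ n and all s₁, s₂ ∈ I one has |⟨e_i(s₁), e_j(s₂)⟩| ≤ C |s₁ − s₂|^{|i−j|} and |⟨γ^{(i)}(s₁), e_j(s₂)⟩| ≤ C |s₁ − s₂|^{max(j−i, 0)}. -/
open MeasureTheory Set
open scoped FourierTransform InnerProductSpace ENNReal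

noncomputable section

/-- Euclidean space ℝⁿ. -/
abbrev Euc (n : ℕ) := EuclideanSpace ℝ (Fin n)

/-- The averaging operator `A_γ f (x) = ∫ f(x - γ(s)) χ(s) ds`. -/
def avgOp {n : ℕ} (γ : ℝ → Euc n) (χ : ℝ → ℝ) (f : Euc n → ℂ) : Euc n → ℂ :=
  fun x => ∫ s : ℝ, f (x - γ s) * (χ s : ℂ)

/-- The `L^p` Sobolev norm `‖𝓕⁻¹[(1+|ξ|²)^{α/2} 𝓕 g]‖_{L^p}` of order `α`. -/
def sobolevNorm {n : ℕ} (p : ℝ≥0∞) (α : ℝ) (g : Euc n → ℂ) : ℝ≥0∞ :=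
  eLpNorm (𝓕⁻ (fun ξ : Euc n => (((1 + ‖ξ‖ ^ 2) ^ (α / 2) : ℝ) : ℂ) * 𝓕 g ξ)) p volume

/-- Non-degeneracy: `|det(γ'(s), …, γ⁽ⁿ⁾(s))| ≥ c₀ > 0` on `I`. -/
def NonDeg {n : ℕ} (γ : ℝ → Euc n) (I : Set ℝ) : Prop :=
  ∃ c₀ > (0 : ℝ), ∀ s ∈ I,
    c₀ ≤ |(Matrix.of fun i j : Fin n => iteratedDeriv ((j : ℕ) + 1) γ s i).det|

/-- The Frenet frame of `γ` at `s`: Gram–Schmidt applied to `(γ'(s), …, γ⁽ⁿ⁾(s))`;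
`frenet γ s i` is `e_{i+1}(s)`. -/
def frenet {n : ℕ} (γ : ℝ → Euc n) (s : ℝ) : Fin n → Euc n :=
  letI : WellFoundedLT (Fin n) := Finite.to_wellFoundedLT
  InnerProductSpace.gramSchmidtNormed ℝ (fun i : Fin n => iteratedDeriv ((i : ℕ) + 1) γ s)

/-! ### Auxiliary lemmas -/

section Aux

variable {E : Type*} [NormedAddCommGroup E] [InnerProductSpace ℝ E]

/-- `iteratedDeriv` of `iteratedDeriv`. -/
lemma aux_iteratedDeriv_iteratedDeriv (f : ℝ → E) (c m : ℕ) :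
    iteratedDeriv m (iteratedDeriv c f) = iteratedDeriv (c + m) f := by
  induction m with
  | zero => simp
  | succ m ih =>
    rw [iteratedDeriv_succ, ih, ← iteratedDeriv_succ]
    exact congrArg (fun t => iteratedDeriv t f) (by omega)

lemma aux_contDiff_iteratedDeriv (f : ℝ → E) (hf : ContDiff ℝ (⊤ : ℕ∞) f) (k : ℕ) :
    ContDiff ℝ (⊤ : ℕ∞) (iteratedDeriv k f) := by
  rw [iteratedDeriv_eq_iterate]; exact hf.iterate_deriv k

/-- `iteratedDeriv` of a continuous linear map composed with `f`. -/
lemma aux_iteratedDeriv_clm (L : E →L[ℝ] ℝ) (f : ℝ → E) (hf : ContDiff ℝ (⊤ : ℕ∞) f) (k : ℕ) :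
    iteratedDeriv k (fun s => L (f s)) = fun s => L (iteratedDeriv k f s) := by
  induction k with
  | zero => simp
  | succ k ih =>
    rw [iteratedDeriv_succ, ih, iteratedDeriv_succ]
    funext x
    have hdiff : DifferentiableAt ℝ (iteratedDeriv k f) x :=
      ((aux_contDiff_iteratedDeriv f hf k).differentiable (by simp)) x
    exact (L.hasFDerivAt.comp_hasDerivAt x hdiff.hasDerivAt).deriv

/-- Inner product with a fixed vector commutes with `iteratedDeriv`. -/
lemma aux_inner_clm (f : ℝ → E) (hf : ContDiff ℝ (⊤ : ℕ∞) f) (w : E) (k : ℕ) (s : ℝ) :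
    iteratedDeriv k (fun t => ⟪f t, w⟫_ℝ) s = ⟪iteratedDeriv k f s, w⟫_ℝ := by
  have h1 : (fun t => ⟪f t, w⟫_ℝ) = fun t => (innerSL ℝ w) (f t) := by
    funext t; rw [innerSL_apply_apply]; exact real_inner_comm _ _
  rw [h1, aux_iteratedDeriv_clm (innerSL ℝ w) f hf k]
  simp only [innerSL_apply_apply]
  exact real_inner_comm _ _

/-- A smooth function whose derivatives of order `< m` vanish at `s₂` and whose `m`-th
derivative is bounded by `D` satisfies `|h s₁| ≤ D * |s₁ - s₂| ^ m`. -/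
lemma aux_flat (a b : ℝ) : ∀ (m : ℕ) (h : ℝ → ℝ), ContDiff ℝ (⊤ : ℕ∞) h →
    ∀ s₂ ∈ Set.Icc a b, (∀ k < m, iteratedDeriv k h s₂ = 0) →
    ∀ D : ℝ, (∀ t ∈ Set.Icc a b, |iteratedDeriv m h t| ≤ D) →
    ∀ s₁ ∈ Set.Icc a b, |h s₁| ≤ D * |s₁ - s₂| ^ m := by
  intro m
  induction m with
  | zero =>
    intro h _ s₂ _ _ D hD s₁ hs₁
    simpa using hD s₁ hs₁
  | succ m ih =>
    intro h hh s₂ hs₂ hz D hD s₁ hs₁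
    have hD0 : 0 ≤ D := le_trans (abs_nonneg _) (hD s₂ hs₂)
    have hd : ∀ s ∈ Set.Icc a b, |deriv h s| ≤ D * |s - s₂| ^ m := by
      apply ih (deriv h) ((contDiff_infty_iff_deriv.mp hh).2) s₂ hs₂
      · intro k hk
        rw [← iteratedDeriv_succ']
        exact hz (k + 1) (by omega)
      · intro t ht
        rw [← iteratedDeriv_succ']
        exact hD t ht
    have hsub : Set.uIcc s₁ s₂ ⊆ Set.Icc a b := Set.uIcc_subset_Icc hs₁ hs₂
    have hbound : ∀ t ∈ Set.uIcc s₁ s₂, ‖deriv h t‖ ≤ D * |s₁ - s₂| ^ m := by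
      intro t ht
      refine le_trans (hd t (hsub ht)) ?_
      apply mul_le_mul_of_nonneg_left _ hD0
      apply pow_le_pow_left₀ (abs_nonneg _)
      rw [abs_sub_le_iff]
      constructor
      · rcases Set.mem_uIcc.mp ht with ⟨h1, h2⟩ | ⟨h1, h2⟩
        · rcases abs_sub_le_iff.mp (le_refl |s₁ - s₂|) with ⟨c1, c2⟩
          nlinarith [abs_nonneg (s₁ - s₂), le_abs_self (s₁ - s₂), neg_abs_le (s₁ - s₂)]
        · nlinarith [le_abs_self (s₁ - s₂), neg_abs_le (s₁ - s₂)]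
      · rcases Set.mem_uIcc.mp ht with ⟨h1, h2⟩ | ⟨h1, h2⟩ <;>
          nlinarith [le_abs_self (s₁ - s₂), neg_abs_le (s₁ - s₂)]
    have key := Convex.norm_image_sub_le_of_norm_deriv_le
      (fun x _ => (hh.differentiable (by simp) x))
      hbound (convex_uIcc s₁ s₂) Set.right_mem_uIcc Set.left_mem_uIcc
    have h2 : h s₂ = 0 := by simpa using hz 0 (by omega)
    rw [h2, sub_zero] at key
    calc |h s₁| ≤ D * |s₁ - s₂| ^ m * ‖s₁ - s₂‖ := key
      _ = D * |s₁ - s₂| ^ (m + 1) := by rw [Real.norm_eq_abs, pow_succ]; ring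

end Aux

section FrenetAux

variable {n : ℕ}

/-- The Frenet vectors have norm at most `1`. -/
lemma aux_frenet_norm_le (γ : ℝ → Euc n) (s : ℝ) (j : Fin n) : ‖frenet γ s j‖ ≤ 1 := by
  haveI : WellFoundedLT (Fin n) := Finite.to_wellFoundedLT
  unfold frenet InnerProductSpace.gramSchmidtNormed
  rw [norm_smul]
  rcases eq_or_ne (InnerProductSpace.gramSchmidt ℝ (fun i : Fin n => iteratedDeriv ((i : ℕ) + 1) γ s) j) 0 with h | h
  · simp [h]
  · simp only [RCLike.ofReal_real_eq_id, id_eq]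
    rw [norm_inv, Real.norm_eq_abs, abs_of_nonneg (norm_nonneg _),
      inv_mul_cancel₀ (norm_ne_zero_iff.mpr h)]

/-- Orthogonality: `frenet γ s j ⊥ γ⁽ᵏ⁺¹⁾(s)` for `k < j`. -/
lemma aux_orth (γ : ℝ → Euc n) (s : ℝ) (j k : Fin n) (hk : k < j) :
    ⟪iteratedDeriv ((k : ℕ) + 1) γ s, frenet γ s j⟫_ℝ = 0 := by
  haveI : WellFoundedLT (Fin n) := Finite.to_wellFoundedLT
  set v : Fin n → Euc n := fun i => iteratedDeriv ((i : ℕ) + 1) γ s with hv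
  have hmem : v k ∈ Submodule.span ℝ (InnerProductSpace.gramSchmidt ℝ v '' Set.Iic k) :=
    InnerProductSpace.mem_span_gramSchmidt ℝ v le_rfl
  have horth : ∀ x ∈ Submodule.span ℝ (InnerProductSpace.gramSchmidt ℝ v '' Set.Iic k),
      ⟪x, InnerProductSpace.gramSchmidt ℝ v j⟫_ℝ = 0 := by
    intro x hx
    induction hx using Submodule.span_induction with
    | mem y hy =>
      obtain ⟨i, hi, rfl⟩ := hy
      exact InnerProductSpace.gramSchmidt_orthogonal ℝ v (by exact ne_of_lt (lt_of_le_of_lt hi hk))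
    | zero => simp
    | add y z _ _ hy hz => rw [inner_add_left, hy, hz, add_zero]
    | smul c y _ hy => rw [inner_smul_left, hy, mul_zero]
  have h0 := horth _ hmem
  show ⟪v k, frenet γ s j⟫_ℝ = 0
  unfold frenet InnerProductSpace.gramSchmidtNormed
  rw [inner_smul_right, h0, mul_zero]

/-- Membership: `frenet γ s j` lies in the span of the derivatives of order `≤ j + 1`. -/
lemma aux_frenet_mem_span (γ : ℝ → Euc n) (s : ℝ) (j : Fin n) :
    frenet γ s j ∈ Submodule.span ℝ
      ((fun i : Fin n => iteratedDeriv ((i : ℕ) + 1) γ s) '' Set.Iic j) := by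
  haveI : WellFoundedLT (Fin n) := Finite.to_wellFoundedLT
  unfold frenet InnerProductSpace.gramSchmidtNormed
  exact Submodule.smul_mem _ _ (InnerProductSpace.gramSchmidt_mem_span ℝ _ le_rfl)

/-- Coordinate bound in Euclidean space. -/
lemma aux_coord_le (x : Euc n) (r : Fin n) : |x r| ≤ ‖x‖ := by
  have := abs_real_inner_le_norm (EuclideanSpace.single r (1 : ℝ)) x
  simpa [EuclideanSpace.inner_single_left] using this

/-- Expansion of `frenet γ s i` in the derivatives with uniformly bounded coefficients. -/
lemma aux_coeff (γ : ℝ → Euc n) (c₀ : ℝ) (hc₀ : 0 < c₀) (s : ℝ) (B : ℝ) (hB1 : 1 ≤ B)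
    (hdet : c₀ ≤ |(Matrix.of fun r k : Fin n => iteratedDeriv ((k : ℕ) + 1) γ s r).det|)
    (hnorm : ∀ k : Fin n, ‖iteratedDeriv ((k : ℕ) + 1) γ s‖ ≤ B) (i : Fin n) :
    ∃ c : Fin n → ℝ, (∀ k, i < k → c k = 0) ∧
      (∀ k, |c k| ≤ c₀⁻¹ * (n.factorial * B ^ n)) ∧
      frenet γ s i = ∑ k, c k • iteratedDeriv ((k : ℕ) + 1) γ s := by
  set v : Fin n → Euc n := fun k => iteratedDeriv ((k : ℕ) + 1) γ s with hv
  set M : Matrix (Fin n) (Fin n) ℝ := Matrix.of fun r k : Fin n => v k r with hM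
  have hdetne : M.det ≠ 0 := by
    intro h; rw [h] at hdet; simp at hdet; linarith
  set e := frenet γ s i with he
  set w : Fin n → ℝ := fun r => e r with hw
  have hmem := aux_frenet_mem_span γ s i
  rw [Finsupp.mem_span_image_iff_linearCombination] at hmem
  obtain ⟨l, hlsupp, hle⟩ := hmem
  set c : Fin n → ℝ := fun k => l k with hc
  have hsum : e = ∑ k, c k • v k := by
    show frenet γ s i = _
    rw [← hle, Finsupp.linearCombination_apply, Finsupp.sum_fintype]
    simp
  have hMc : M.mulVec c = w := by
    funext r
    rw [Matrix.mulVec, dotProduct]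
    have : w r = e r := rfl
    rw [this, hsum]
    have := map_sum (EuclideanSpace.proj r (𝕜 := ℝ)) (fun k => c k • v k) Finset.univ
    rw [show ((∑ k, c k • v k : Euc n) r) = EuclideanSpace.proj r (𝕜 := ℝ) (∑ k, c k • v k)
      from rfl, this]
    congr 1; funext k
    simp [hM, mul_comm]
  set c' : Fin n → ℝ := (M.det)⁻¹ • M.cramer w with hc'
  have hMc' : M.mulVec c' = w := by
    rw [hc', Matrix.mulVec_smul, Matrix.mulVec_cramer, smul_smul,
      inv_mul_cancel₀ hdetne, one_smul]
  have hcc : c = c' := by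
    haveI := M.invertibleOfIsUnitDet (isUnit_iff_ne_zero.mpr hdetne)
    exact M.mulVec_injective_of_invertible (hMc.trans hMc'.symm)
  refine ⟨c, ?_, ?_, by rw [← hsum]⟩
  · intro k hk
    have : k ∉ l.support := fun hcon => absurd (hlsupp hcon) (by simpa using not_le.mpr hk)
    simpa [hc] using Finsupp.notMem_support_iff.mp this
  · intro k
    rw [hcc, hc']
    simp only [Pi.smul_apply, smul_eq_mul, abs_mul, abs_inv]
    have h1 : |M.det|⁻¹ ≤ c₀⁻¹ := inv_anti₀ hc₀ hdet
    have h2 : |M.cramer w k| ≤ n.factorial * B ^ n := by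
      rw [Matrix.cramer_apply]
      have hx : ∀ r t : Fin n, |(M.updateCol k w) r t| ≤ B := by
        intro r t
        rw [Matrix.updateCol_apply]
        split
        · calc |w r| ≤ ‖e‖ := aux_coord_le e r
            _ ≤ 1 := aux_frenet_norm_le γ s i
            _ ≤ B := hB1
        · calc |M r t| = |v t r| := rfl
            _ ≤ ‖v t‖ := aux_coord_le _ _
            _ ≤ B := hnorm t
      have := Matrix.det_le (abv := (AbsoluteValue.abs : AbsoluteValue ℝ ℝ))
        (A := M.updateCol k w) (x := B) hx
      simpa [Fintype.card_fin, nsmul_eq_mul] using this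
    exact mul_le_mul h1 h2 (abs_nonneg _) (by positivity)

end FrenetAux

/-- Frenet frame bounds `|⟨e_i(s₁), e_j(s₂)⟩| ≲ |s₁ − s₂|^{|i−j|}` and
`|⟨γ⁽ⁱ⁾(s₁), e_j(s₂)⟩| ≲ |s₁ − s₂|^{max(j−i,0)}`.  Here the index `i : Fin n`
corresponds to the (1-based) index `i+1`. -/
theorem statement9 (n : ℕ) (hn : 2 ≤ n) (a b : ℝ) (hab : a < b)
    (γ : ℝ → Euc n) (hγ : ContDiff ℝ (⊤ : ℕ∞) γ)
    (hnd : NonDeg γ (Set.Icc a b)) :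
    ∃ C : ℝ, 0 < C ∧ ∀ i j : Fin n, ∀ s₁ ∈ Set.Icc a b, ∀ s₂ ∈ Set.Icc a b,
      |⟪frenet γ s₁ i, frenet γ s₂ j⟫_ℝ| ≤ C * |s₁ - s₂| ^ (((i : ℤ) - (j : ℤ)).natAbs) ∧
      |⟪iteratedDeriv ((i : ℕ) + 1) γ s₁, frenet γ s₂ j⟫_ℝ| ≤
        C * |s₁ - s₂| ^ ((j : ℕ) - (i : ℕ)) := by
  obtain ⟨c₀, hc₀, hdet⟩ := hnd
  -- a uniform bound on all derivatives up to order `n` on `[a, b]`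
  set g : ℝ → ℝ := fun s => ∑ m ∈ Finset.range (n + 1), ‖iteratedDeriv m γ s‖ with hg
  have hgc : Continuous g := by
    apply continuous_finset_sum
    intro m _
    exact ((aux_contDiff_iteratedDeriv γ hγ m).continuous).norm
  obtain ⟨x₀, hx₀, hmax⟩ := isCompact_Icc.exists_isMaxOn (Set.nonempty_Icc.mpr hab.le)
    hgc.continuousOn
  set B : ℝ := max (g x₀) 1 with hB
  have hB1 : (1 : ℝ) ≤ B := le_max_right _ _
  have hB0 : (0 : ℝ) < B := lt_of_lt_of_le one_pos hB1
  have hBd : ∀ m : ℕ, m ≤ n → ∀ s ∈ Set.Icc a b, ‖iteratedDeriv m γ s‖ ≤ B := by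
    intro m hm s hs
    have h1 : ‖iteratedDeriv m γ s‖ ≤ g s := by
      apply Finset.single_le_sum (f := fun m => ‖iteratedDeriv m γ s‖)
        (fun i _ => norm_nonneg _)
      simp [Finset.mem_range]; omega
    exact le_trans (le_trans h1 (hmax hs)) (le_max_left _ _)
  -- Step 2: the Taylor-type bound for derivatives against the Frenet frame
  have step2 : ∀ i j : Fin n, ∀ s₁ ∈ Set.Icc a b, ∀ s₂ ∈ Set.Icc a b,
      |⟪iteratedDeriv ((i : ℕ) + 1) γ s₁, frenet γ s₂ j⟫_ℝ| ≤
        B * |s₁ - s₂| ^ ((j : ℕ) - (i : ℕ)) := by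
    intro i j s₁ hs₁ s₂ hs₂
    set w := frenet γ s₂ j with hwdef
    have hwn : ‖w‖ ≤ 1 := aux_frenet_norm_le γ s₂ j
    set m := (j : ℕ) - (i : ℕ) with hm
    set f : ℝ → Euc n := iteratedDeriv ((i : ℕ) + 1) γ with hf
    have hfc : ContDiff ℝ (⊤ : ℕ∞) f := aux_contDiff_iteratedDeriv γ hγ _
    set h : ℝ → ℝ := fun t => ⟪f t, w⟫_ℝ with hh
    have hhc : ContDiff ℝ (⊤ : ℕ∞) h := by
      have : h = fun t => (innerSL ℝ w) (f t) := by
        funext t; rw [innerSL_apply_apply]; exact real_inner_comm _ _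
      rw [this]
      exact (innerSL ℝ w).contDiff.comp hfc
    have hiter : ∀ (k : ℕ) (t : ℝ), iteratedDeriv k h t =
        ⟪iteratedDeriv ((i : ℕ) + 1 + k) γ t, w⟫_ℝ := by
      intro k t
      rw [hh, aux_inner_clm f hfc w k t, hf, aux_iteratedDeriv_iteratedDeriv]
    have hz : ∀ k < m, iteratedDeriv k h s₂ = 0 := by
      intro k hk
      rw [hiter k s₂]
      have hkj : (i : ℕ) + k < (j : ℕ) := by omega
      have hkn : (i : ℕ) + k < n := lt_trans hkj j.isLt
      have heq : (i : ℕ) + 1 + k = ((⟨(i : ℕ) + k, hkn⟩ : Fin n) : ℕ) + 1 := by simp; omega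
      rw [heq]
      exact aux_orth γ s₂ j ⟨(i : ℕ) + k, hkn⟩ (by simpa [Fin.lt_def] using hkj)
    have hDb : ∀ t ∈ Set.Icc a b, |iteratedDeriv m h t| ≤ B := by
      intro t ht
      rw [hiter m t]
      have hle : (i : ℕ) + 1 + m ≤ n := by
        have := i.isLt; have := j.isLt; omega
      calc |⟪iteratedDeriv ((i : ℕ) + 1 + m) γ t, w⟫_ℝ|
          ≤ ‖iteratedDeriv ((i : ℕ) + 1 + m) γ t‖ * ‖w‖ := abs_real_inner_le_norm _ _
        _ ≤ B * 1 := mul_le_mul (hBd _ hle t ht) hwn (norm_nonneg _) hB0.le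
        _ = B := mul_one B
    exact aux_flat a b m h hhc s₂ hs₂ hz B hDb s₁ hs₁
  -- Step 1: frame-frame bound for `i ≤ j`
  set L : ℝ := max (b - a) 1 with hL
  have hL1 : (1 : ℝ) ≤ L := le_max_right _ _
  set C₁ : ℝ := n * (c₀⁻¹ * (n.factorial * B ^ n)) * (B * L ^ n) with hC₁
  have hC₁0 : 0 ≤ C₁ := by positivity
  have step1 : ∀ i j : Fin n, i ≤ j → ∀ s₁ ∈ Set.Icc a b, ∀ s₂ ∈ Set.Icc a b,
      |⟪frenet γ s₁ i, frenet γ s₂ j⟫_ℝ| ≤ C₁ * |s₁ - s₂| ^ ((j : ℕ) - (i : ℕ)) := by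
    intro i j hij s₁ hs₁ s₂ hs₂
    obtain ⟨c, hcz, hcb, hrep⟩ := aux_coeff γ c₀ hc₀ s₁ B hB1 (hdet s₁ hs₁)
      (fun k => hBd ((k : ℕ) + 1) k.isLt s₁ hs₁) i
    have habs : |s₁ - s₂| ≤ L := by
      rw [abs_sub_le_iff]
      constructor <;> [skip; skip] <;>
        · have h1 := hs₁.1; have h2 := hs₁.2; have h3 := hs₂.1; have h4 := hs₂.2
          have : b - a ≤ L := le_max_left _ _
          linarith
    have habs0 : (0 : ℝ) ≤ |s₁ - s₂| := abs_nonneg _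
    rw [hrep, sum_inner]
    have hterm : ∀ k : Fin n,
        |⟪c k • iteratedDeriv ((k : ℕ) + 1) γ s₁, frenet γ s₂ j⟫_ℝ| ≤
          (c₀⁻¹ * (n.factorial * B ^ n)) * (B * L ^ n) * |s₁ - s₂| ^ ((j : ℕ) - (i : ℕ)) := by
      intro k
      rcases lt_or_ge i k with hik | hki
      · rw [hcz k hik]
        simp only [zero_smul, inner_zero_left, abs_zero]
        positivity
      · -- k ≤ i ≤ j
        rw [real_inner_smul_left, abs_mul]
        have hs2k := step2 k j s₁ hs₁ s₂ hs₂
        have hkj : (k : ℕ) ≤ (j : ℕ) := le_trans hki hij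
        have hexp : (j : ℕ) - (k : ℕ) = ((j : ℕ) - (i : ℕ)) + ((i : ℕ) - (k : ℕ)) := by
          have : (i : ℕ) ≤ (j : ℕ) := hij
          have : (k : ℕ) ≤ (i : ℕ) := hki
          omega
        have hpow : |s₁ - s₂| ^ ((j : ℕ) - (k : ℕ)) ≤
            L ^ n * |s₁ - s₂| ^ ((j : ℕ) - (i : ℕ)) := by
          rw [hexp, pow_add, mul_comm (L ^ n)]
          apply mul_le_mul_of_nonneg_left _ (pow_nonneg habs0 _)
          calc |s₁ - s₂| ^ ((i : ℕ) - (k : ℕ)) ≤ L ^ ((i : ℕ) - (k : ℕ)) :=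
              pow_le_pow_left₀ habs0 habs _
            _ ≤ L ^ n := pow_le_pow_right₀ hL1 (by have := i.isLt; omega)
        calc |c k| * |⟪iteratedDeriv ((k : ℕ) + 1) γ s₁, frenet γ s₂ j⟫_ℝ|
            ≤ (c₀⁻¹ * (n.factorial * B ^ n)) * (B * |s₁ - s₂| ^ ((j : ℕ) - (k : ℕ)))
              := by
                apply mul_le_mul (hcb k) hs2k (abs_nonneg _) (by positivity)
          _ ≤ (c₀⁻¹ * (n.factorial * B ^ n)) * (B * (L ^ n * |s₁ - s₂| ^ ((j : ℕ) - (i : ℕ))))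
              := by
                apply mul_le_mul_of_nonneg_left _ (by positivity)
                exact mul_le_mul_of_nonneg_left hpow hB0.le
          _ = (c₀⁻¹ * (n.factorial * B ^ n)) * (B * L ^ n) * |s₁ - s₂| ^ ((j : ℕ) - (i : ℕ))
              := by ring
    calc |∑ k, ⟪c k • iteratedDeriv ((k : ℕ) + 1) γ s₁, frenet γ s₂ j⟫_ℝ|
        ≤ ∑ k, |⟪c k • iteratedDeriv ((k : ℕ) + 1) γ s₁, frenet γ s₂ j⟫_ℝ| :=
          Finset.abs_sum_le_sum_abs _ _
      _ ≤ ∑ _k : Fin n, (c₀⁻¹ * (n.factorial * B ^ n)) * (B * L ^ n) *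
            |s₁ - s₂| ^ ((j : ℕ) - (i : ℕ)) :=
          Finset.sum_le_sum fun k _ => hterm k
      _ = C₁ * |s₁ - s₂| ^ ((j : ℕ) - (i : ℕ)) := by
          rw [Finset.sum_const, Finset.card_univ, Fintype.card_fin, nsmul_eq_mul, hC₁]; ring
  -- Conclusion
  refine ⟨C₁ + B + 1, by positivity, fun i j s₁ hs₁ s₂ hs₂ => ⟨?_, ?_⟩⟩
  · rcases le_total i j with hij | hji
    · have h := step1 i j hij s₁ hs₁ s₂ hs₂
      have hexp : (((i : ℤ) - (j : ℤ)).natAbs) = (j : ℕ) - (i : ℕ) := by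
        have : (i : ℕ) ≤ (j : ℕ) := hij
        omega
      rw [hexp]
      refine le_trans h ?_
      apply mul_le_mul_of_nonneg_right (by linarith [hB0]) (pow_nonneg (abs_nonneg _) _)
    · have h := step1 j i hji s₂ hs₂ s₁ hs₁
      have hexp : (((i : ℤ) - (j : ℤ)).natAbs) = (i : ℕ) - (j : ℕ) := by
        have : (j : ℕ) ≤ (i : ℕ) := hji
        omega
      rw [hexp, real_inner_comm, abs_sub_comm s₁ s₂]
      refine le_trans h ?_
      apply mul_le_mul_of_nonneg_right (by linarith [hB0]) (pow_nonneg (abs_nonneg _) _)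
  · have h := step2 i j s₁ hs₁ s₂ hs₂
    refine le_trans h ?_
    apply mul_le_mul_of_nonneg_right (by linarith [hC₁0]) (pow_nonneg (abs_nonneg _) _)
end
end

section
/- There is an absolute constant δ* ∈ (0,1) such that for every 0 < δ₀ ≤ δ* the following holds. Let γ ∈ 𝔊₄(δ₀) and let ξ ∈ ℝ⁴∖{0} be admissible for γ with parameter δ₀. Then the equation ⟨γ^{(3)}(s), ξ⟩ = 0 has a unique solution θ₂(ξ) in [−1,1]; this θ₂(ξ) is the unique point at which the function s ↦ ⟨γ''(s), ξ⟩ attains its global minimum over [−1,1]; and |θ₂(ξ)| ≤ C δ₀ for an absolute constant C. -/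
open MeasureTheory Set
open scoped FourierTransform InnerProductSpace ENNReal

noncomputable section

/-- The moment curve `γ∘(s) = (s, s²/2!, …, sⁿ/n!)`. -/
def momentCurve (n : ℕ) (s : ℝ) : Euc n :=
  WithLp.toLp 2 (fun i : Fin n => s ^ ((i : ℕ) + 1) / (Nat.factorial ((i : ℕ) + 1) : ℝ))

/-- The class `𝔊_n(δ)` of model curves: smooth `γ : [−1,1] → ℝⁿ` with `γ(0) = 0`,
`γ⁽ʲ⁾(0) = e_j` for `1 ≤ j ≤ n`, and `‖γ − γ∘‖_{C^{n+1}([−1,1])} ≤ δ`. -/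
def InG (n : ℕ) (δ : ℝ) (γ : ℝ → Euc n) : Prop :=
  ContDiff ℝ (⊤ : ℕ∞) γ ∧ γ 0 = 0 ∧
  (∀ i : Fin n, iteratedDeriv ((i : ℕ) + 1) γ 0 = EuclideanSpace.single i 1) ∧
  ∀ j : ℕ, 1 ≤ j → j ≤ n + 1 → ∀ s ∈ Set.Icc (-1 : ℝ) 1,
    ‖iteratedDeriv j γ s - iteratedDeriv j (momentCurve n) s‖ ≤ δ

/-- `ξ` is admissible for `γ` with parameter `δ₀`: with `I₀ = [−δ₀, δ₀]`,
`⟨γ⁽⁴⁾(s), ξ⟩ ≥ (9/10)|ξ|` on `I₀`, `⟨γ⁽⁴⁾(s), ξ⟩ ≥ (1/2)|ξ|` on `[−1,1]`, and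
`|⟨γ⁽ʲ⁾(s), ξ⟩| ≤ 8δ₀|ξ|` for `j = 1, 2, 3` on `I₀`. -/
def Admissible (δ₀ : ℝ) (γ : ℝ → Euc 4) (ξ : Euc 4) : Prop :=
  (∀ s ∈ Set.Icc (-δ₀) δ₀, (9 / 10) * ‖ξ‖ ≤ ⟪iteratedDeriv 4 γ s, ξ⟫_ℝ) ∧
  (∀ s ∈ Set.Icc (-1 : ℝ) 1, (1 / 2) * ‖ξ‖ ≤ ⟪iteratedDeriv 4 γ s, ξ⟫_ℝ) ∧
  (∀ j : ℕ, 1 ≤ j → j ≤ 3 → ∀ s ∈ Set.Icc (-δ₀) δ₀,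
    |⟪iteratedDeriv j γ s, ξ⟫_ℝ| ≤ 8 * δ₀ * ‖ξ‖)

/-- existence, uniqueness, minimality and size of the root `θ₂(ξ)` of
`⟨γ⁽³⁾(·), ξ⟩` on `[−1,1]` for admissible `ξ`. -/
theorem statement11 :
    ∃ δs : ℝ, 0 < δs ∧ δs < 1 ∧ ∃ C : ℝ, 0 < C ∧
    ∀ δ₀ : ℝ, 0 < δ₀ → δ₀ ≤ δs →
    ∀ γ : ℝ → Euc 4, InG 4 δ₀ γ →
    ∀ ξ : Euc 4, ξ ≠ 0 → Admissible δ₀ γ ξ →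
      (∃! s : ℝ, s ∈ Set.Icc (-1 : ℝ) 1 ∧ ⟪iteratedDeriv 3 γ s, ξ⟫_ℝ = 0) ∧
      ∀ θ : ℝ, θ ∈ Set.Icc (-1 : ℝ) 1 → ⟪iteratedDeriv 3 γ θ, ξ⟫_ℝ = 0 →
        (∀ t ∈ Set.Icc (-1 : ℝ) 1, t ≠ θ →
          ⟪iteratedDeriv 2 γ θ, ξ⟫_ℝ < ⟪iteratedDeriv 2 γ t, ξ⟫_ℝ) ∧
        |θ| ≤ C * δ₀ := by
  refine ⟨1/100, by norm_num, by norm_num, 16, by norm_num, ?_⟩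
  intro δ₀ hδ0 hδs γ hγ ξ hξ hadm
  obtain ⟨hsm, -, -, -⟩ := hγ
  obtain ⟨h9, h12, hj⟩ := hadm
  have hξn : (0:ℝ) < ‖ξ‖ := norm_pos_iff.mpr hξ
  -- derivative facts
  have hder : ∀ n : ℕ, ∀ x : ℝ,
      HasDerivAt (fun t => ⟪iteratedDeriv n γ t, ξ⟫_ℝ) (⟪iteratedDeriv (n+1) γ x, ξ⟫_ℝ) x := by
    intro n x
    have hd : Differentiable ℝ (iteratedDeriv n γ) :=
      hsm.differentiable_iteratedDeriv n
        (by exact_mod_cast WithTop.coe_lt_coe.mpr (WithTop.coe_lt_top n))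
    have h1 : HasDerivAt (iteratedDeriv n γ) (iteratedDeriv (n+1) γ x) x := by
      rw [iteratedDeriv_succ]
      exact (hd x).hasDerivAt
    simpa using h1.inner ℝ (hasDerivAt_const x ξ)
  set g : ℝ → ℝ := fun t => ⟪iteratedDeriv 3 γ t, ξ⟫_ℝ with hgdef
  have hgder : ∀ x : ℝ, HasDerivAt g (⟪iteratedDeriv 4 γ x, ξ⟫_ℝ) x := hder 3
  have hgcont : Continuous g := by
    apply continuous_iff_continuousAt.mpr
    exact fun x => (hgder x).continuousAt
  -- g is strictly monotone on [-1, 1]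
  have hgmono : StrictMonoOn g (Set.Icc (-1:ℝ) 1) := by
    apply strictMonoOn_of_deriv_pos (convex_Icc _ _) hgcont.continuousOn
    intro x hx
    rw [interior_Icc] at hx
    rw [(hgder x).deriv]
    have := h12 x ⟨hx.1.le, hx.2.le⟩
    nlinarith
  -- bound on g 0
  have hg0 : |g 0| ≤ 8 * δ₀ * ‖ξ‖ :=
    hj 3 (by norm_num) (by norm_num) 0 ⟨by linarith, by linarith⟩
  have habs := abs_le.mp hg0
  -- g 1 > 0
  have hg1 : 0 < g 1 := by
    obtain ⟨c, hc, hceq⟩ := exists_hasDerivAt_eq_slope g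
      (fun x => ⟪iteratedDeriv 4 γ x, ξ⟫_ℝ) (by norm_num : (0:ℝ) < 1)
      hgcont.continuousOn (fun x _ => hgder x)
    have h4 := h12 c ⟨by linarith [hc.1], hc.2.le⟩
    rw [hceq] at h4
    have : (1/2) * ‖ξ‖ ≤ g 1 - g 0 := by
      calc (1/2) * ‖ξ‖ ≤ (g 1 - g 0) / (1 - 0) := h4
      _ = g 1 - g 0 := by ring
    nlinarith
  -- g (-1) < 0
  have hgm1 : g (-1) < 0 := by
    obtain ⟨c, hc, hceq⟩ := exists_hasDerivAt_eq_slope g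
      (fun x => ⟪iteratedDeriv 4 γ x, ξ⟫_ℝ) (by norm_num : (-1:ℝ) < 0)
      hgcont.continuousOn (fun x _ => hgder x)
    have h4 := h12 c ⟨hc.1.le, by linarith [hc.2]⟩
    rw [hceq] at h4
    have : (1/2) * ‖ξ‖ ≤ (g 0 - g (-1)) / (0 - (-1)) := h4
    have h5 : (1/2) * ‖ξ‖ ≤ g 0 - g (-1) := by
      calc (1/2) * ‖ξ‖ ≤ (g 0 - g (-1)) / (0 - (-1)) := h4
      _ = g 0 - g (-1) := by ring
    nlinarith
  -- existence of root by IVT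
  have hex : ∃ s ∈ Set.Icc (-1:ℝ) 1, g s = 0 := by
    have h := intermediate_value_Icc (by norm_num : (-1:ℝ) ≤ 1) hgcont.continuousOn
    have h0 : (0:ℝ) ∈ Set.Icc (g (-1)) (g 1) := ⟨hgm1.le, hg1.le⟩
    obtain ⟨s, hs, hgs⟩ := h h0
    exact ⟨s, hs, hgs⟩
  obtain ⟨s₀, hs₀, hgs₀⟩ := hex
  refine ⟨⟨s₀, ⟨hs₀, hgs₀⟩, ?_⟩, ?_⟩
  · rintro t ⟨ht, hgt⟩
    have hgt' : g t = 0 := hgt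
    exact hgmono.injOn ht hs₀ (by rw [hgt', hgs₀])
  intro θ hθ hθ0'
  have hθ0 : g θ = 0 := hθ0'
  constructor
  · -- strict minimality of h at θ
    set h2 : ℝ → ℝ := fun t => ⟪iteratedDeriv 2 γ t, ξ⟫_ℝ with hh2def
    have h2der : ∀ x : ℝ, HasDerivAt h2 (g x) x := hder 2
    have h2cont : Continuous h2 := continuous_iff_continuousAt.mpr
      (fun x => (h2der x).continuousAt)
    have hmono : StrictMonoOn h2 (Set.Icc θ 1) := by
      apply strictMonoOn_of_deriv_pos (convex_Icc _ _) h2cont.continuousOn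
      intro x hx
      rw [interior_Icc] at hx
      rw [(h2der x).deriv]
      have := hgmono hθ ⟨by linarith [hθ.1, hx.1], hx.2.le⟩ hx.1
      linarith
    have hanti : StrictAntiOn h2 (Set.Icc (-1:ℝ) θ) := by
      apply strictAntiOn_of_deriv_neg (convex_Icc _ _) h2cont.continuousOn
      intro x hx
      rw [interior_Icc] at hx
      rw [(h2der x).deriv]
      have := hgmono ⟨hx.1.le, by linarith [hθ.2, hx.2]⟩ hθ hx.2
      linarith
    intro t ht hne
    rcases lt_or_gt_of_ne hne with hlt | hgt
    · exact hanti ⟨ht.1, hlt.le⟩ ⟨by linarith [hθ.1], le_refl θ⟩ hlt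
    · exact hmono ⟨le_refl θ, hθ.2⟩ ⟨hgt.le, ht.2⟩ hgt
  · -- |θ| ≤ 16 δ₀
    rcases lt_trichotomy θ 0 with hlt | heq | hgt
    · obtain ⟨c, hc, hceq⟩ := exists_hasDerivAt_eq_slope g
        (fun x => ⟪iteratedDeriv 4 γ x, ξ⟫_ℝ) hlt
        hgcont.continuousOn (fun x _ => hgder x)
      have h4 := h12 c ⟨by linarith [hc.1, hθ.1], by linarith [hc.2]⟩
      rw [hceq] at h4
      have h5 : (1/2) * ‖ξ‖ * (0 - θ) ≤ g 0 - g θ := by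
        have hpos : (0:ℝ) < 0 - θ := by linarith
        calc (1/2) * ‖ξ‖ * (0 - θ) ≤ (g 0 - g θ) / (0 - θ) * (0 - θ) := by
              apply mul_le_mul_of_nonneg_right h4 hpos.le
        _ = g 0 - g θ := div_mul_cancel₀ _ hpos.ne'
      rw [hθ0] at h5
      rw [abs_of_neg hlt]
      nlinarith
    · rw [heq]; simp; positivity
    · obtain ⟨c, hc, hceq⟩ := exists_hasDerivAt_eq_slope g
        (fun x => ⟪iteratedDeriv 4 γ x, ξ⟫_ℝ) hgt
        hgcont.continuousOn (fun x _ => hgder x)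
      have h4 := h12 c ⟨by linarith [hc.1], by linarith [hc.2, hθ.2]⟩
      rw [hceq] at h4
      have h5 : (1/2) * ‖ξ‖ * (θ - 0) ≤ g θ - g 0 := by
        have hpos : (0:ℝ) < θ - 0 := by linarith
        calc (1/2) * ‖ξ‖ * (θ - 0) ≤ (g θ - g 0) / (θ - 0) * (θ - 0) := by
              apply mul_le_mul_of_nonneg_right h4 hpos.le
        _ = g θ - g 0 := div_mul_cancel₀ _ hpos.ne'
      rw [hθ0] at h5
      rw [abs_of_pos hgt]
      nlinarith
end
end

section
/- There is an absolute constant δ* ∈ (0,1) such that for every 0 < δ₀ ≤ δ* the following holds. Let γ ∈ 𝔊₄(δ₀), let ξ ∈ ℝ⁴∖{0} be admissible for γ with parameter δ₀, let θ₂(ξ) ∈ [−1,1] be the unique solution of ⟨γ^{(3)}(s), ξ⟩ = 0 on [−1,1], and set u₂(ξ) := ⟨γ''(θ₂(ξ)), ξ⟩. Then: (i) if u₂(ξ) > 0, the equation ⟨γ''(s), ξ⟩ = 0 has no solution in [−1,1]; (ii) if u₂(ξ) = 0, its only solution in [−1,1] is s = θ₂(ξ); (iii) if u₂(ξ) < 0,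 it has exactly two solutions in [−1,1], and both solutions have absolute value at most C δ₀^{1/2} for an absolute constant C. -/
open MeasureTheory Set
open scoped FourierTransform InnerProductSpace ENNReal

noncomputable section

lemma slope_ge' {f f' : ℝ → ℝ} (hf : ∀ s, HasDerivAt f (f' s) s) {a b c : ℝ}
    (hab : a ≤ b) (h : ∀ s ∈ Icc a b, c ≤ f' s) : c * (b - a) ≤ f b - f a := by
  rcases eq_or_lt_of_le hab with rfl | hlt
  · simp
  · have hcont : ContinuousOn f (Icc a b) :=
      fun x _ => ((hf x).continuousAt).continuousWithinAt
    obtain ⟨x, hx, hfx⟩ := exists_hasDerivAt_eq_slope f f' hlt hcont (fun x _ => hf x)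
    have hc := h x ⟨hx.1.le, hx.2.le⟩
    rw [hfx] at hc
    have hba : 0 < b - a := by linarith
    calc c * (b - a) ≤ ((f b - f a) / (b - a)) * (b - a) := by
          exact mul_le_mul_of_nonneg_right hc hba.le
      _ = f b - f a := by field_simp

lemma slope_le' {f f' : ℝ → ℝ} (hf : ∀ s, HasDerivAt f (f' s) s) {a b c : ℝ}
    (hab : a ≤ b) (h : ∀ s ∈ Icc a b, f' s ≤ c) : f b - f a ≤ c * (b - a) := by
  have := slope_ge' (f := fun s => -f s) (f' := fun s => -f' s)
    (fun s => (hf s).neg) hab (c := -c) (fun s hs => by simpa using h s hs)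
  linarith

lemma quad_lower {f f' f'' : ℝ → ℝ} (hf : ∀ s, HasDerivAt f (f' s) s)
    (hf' : ∀ s, HasDerivAt f' (f'' s) s) {a b θ : ℝ} (hθ : θ ∈ Icc a b)
    {m : ℝ} (hm : 0 ≤ m) (h2 : ∀ s ∈ Icc a b, m ≤ f'' s) (h1 : f' θ = 0) :
    ∀ s ∈ Icc a b, f θ + m / 4 * (s - θ) ^ 2 ≤ f s := by
  intro s hs
  rcases le_total θ s with hts | hts
  · set p := (θ + s) / 2 with hp
    have hθp : θ ≤ p := by rw [hp]; linarith
    have hps : p ≤ s := by rw [hp]; linarith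
    -- f' t ≥ m * (t - θ) for t ∈ [θ, s]
    have key : ∀ t, θ ≤ t → t ≤ s → m * (t - θ) ≤ f' t := by
      intro t h1t h2t
      have := slope_ge' hf' h1t (c := m)
        (fun u hu => h2 u ⟨le_trans hθ.1 hu.1, le_trans hu.2 (le_trans h2t hs.2)⟩)
      rw [h1] at this; linarith
    have step1 : 0 ≤ f p - f θ := by
      have := slope_ge' hf hθp (c := 0)
        (fun u hu => le_trans (by nlinarith [hu.1]) (key u hu.1 (le_trans hu.2 hps)))
      linarith
    have step2 : m * (p - θ) * (s - p) ≤ f s - f p := by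
      have := slope_ge' hf hps (c := m * (p - θ))
        (fun u hu => le_trans (by nlinarith [hu.1]) (key u (le_trans hθp hu.1) hu.2))
      linarith
    have e : m * (p - θ) * (s - p) = m / 4 * (s - θ) ^ 2 := by rw [hp]; ring
    linarith
  · set p := (s + θ) / 2 with hp
    have hsp : s ≤ p := by rw [hp]; linarith
    have hpθ : p ≤ θ := by rw [hp]; linarith
    have key : ∀ t, s ≤ t → t ≤ θ → f' t ≤ -(m * (θ - t)) := by
      intro t h1t h2t
      have := slope_ge' hf' h2t (c := m)
        (fun u hu => h2 u ⟨le_trans hs.1 (le_trans h1t hu.1), le_trans hu.2 hθ.2⟩)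
      rw [h1] at this; linarith
    have step1 : f θ - f p ≤ 0 := by
      have := slope_le' hf hpθ (c := 0)
        (fun u hu => le_trans (key u (le_trans hsp hu.1) hu.2) (by nlinarith [hu.2]))
      linarith
    have step2 : f p - f s ≤ -(m * (θ - p)) * (p - s) := by
      have := slope_le' hf hsp (c := -(m * (θ - p)))
        (fun u hu => le_trans (key u hu.1 (le_trans hu.2 hpθ)) (by nlinarith [hu.2]))
      linarith
    have e : -(m * (θ - p)) * (p - s) = -(m / 4 * (s - θ) ^ 2) := by rw [hp]; ring
    linarith

lemma hasDerivAt_inner_iteratedDeriv {γ : ℝ → Euc 4} (hγ : ContDiff ℝ (⊤ : ℕ∞) γ)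
    (ξ : Euc 4) (j : ℕ) (s : ℝ) :
    HasDerivAt (fun t => ⟪iteratedDeriv j γ t, ξ⟫_ℝ) ⟪iteratedDeriv (j + 1) γ s, ξ⟫_ℝ s := by
  have hd : Differentiable ℝ (iteratedDeriv j γ) :=
    (contDiff_iff_iteratedDeriv.mp hγ).2 j (by simp)
  have h1 : HasDerivAt (iteratedDeriv j γ) (iteratedDeriv (j + 1) γ s) s := by
    rw [iteratedDeriv_succ]; exact (hd s).hasDerivAt
  have h2 := h1.inner ℝ (hasDerivAt_const s ξ)
  simpa using h2

set_option maxHeartbeats 1600000 in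
/-- trichotomy for the roots of `⟨γ''(·), ξ⟩` on `[−1,1]` according to the
sign of `u₂(ξ) = ⟨γ''(θ₂(ξ)), ξ⟩`. -/
theorem statement12 :
    ∃ δs : ℝ, 0 < δs ∧ δs < 1 ∧ ∃ C : ℝ, 0 < C ∧
    ∀ δ₀ : ℝ, 0 < δ₀ → δ₀ ≤ δs →
    ∀ γ : ℝ → Euc 4, InG 4 δ₀ γ →
    ∀ ξ : Euc 4, ξ ≠ 0 → Admissible δ₀ γ ξ →
    ∀ θ : ℝ, θ ∈ Set.Icc (-1 : ℝ) 1 → ⟪iteratedDeriv 3 γ θ, ξ⟫_ℝ = 0 →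
      ((0 < ⟪iteratedDeriv 2 γ θ, ξ⟫_ℝ →
          ∀ s ∈ Set.Icc (-1 : ℝ) 1, ⟪iteratedDeriv 2 γ s, ξ⟫_ℝ ≠ 0) ∧
       (⟪iteratedDeriv 2 γ θ, ξ⟫_ℝ = 0 →
          ∀ s ∈ Set.Icc (-1 : ℝ) 1, ⟪iteratedDeriv 2 γ s, ξ⟫_ℝ = 0 → s = θ) ∧
       (⟪iteratedDeriv 2 γ θ, ξ⟫_ℝ < 0 →
          ∃ s₁ s₂ : ℝ, s₁ ∈ Set.Icc (-1 : ℝ) 1 ∧ s₂ ∈ Set.Icc (-1 : ℝ) 1 ∧ s₁ ≠ s₂ ∧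
            ⟪iteratedDeriv 2 γ s₁, ξ⟫_ℝ = 0 ∧ ⟪iteratedDeriv 2 γ s₂, ξ⟫_ℝ = 0 ∧
            |s₁| ≤ C * Real.sqrt δ₀ ∧ |s₂| ≤ C * Real.sqrt δ₀ ∧
            ∀ s ∈ Set.Icc (-1 : ℝ) 1, ⟪iteratedDeriv 2 γ s, ξ⟫_ℝ = 0 →
              s = s₁ ∨ s = s₂)) := by
  refine ⟨1/1000, by norm_num, by norm_num, 26, by norm_num, ?_⟩
  intro δ₀ hδ0 hδs γ hγ ξ hξ hadm θ hθmem hθ3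
  have hK : (0 : ℝ) < ‖ξ‖ := norm_pos_iff.mpr hξ
  set K : ℝ := ‖ξ‖ with hKdef
  set G2 : ℝ → ℝ := fun s => ⟪iteratedDeriv 2 γ s, ξ⟫_ℝ with hG2def
  set G3 : ℝ → ℝ := fun s => ⟪iteratedDeriv 3 γ s, ξ⟫_ℝ with hG3def
  set G4 : ℝ → ℝ := fun s => ⟪iteratedDeriv 4 γ s, ξ⟫_ℝ with hG4def
  have hD2 : ∀ s, HasDerivAt G2 (G3 s) s := fun s => by
    simpa using hasDerivAt_inner_iteratedDeriv hγ.1 ξ 2 s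
  have hD3 : ∀ s, HasDerivAt G3 (G4 s) s := fun s => by
    simpa using hasDerivAt_inner_iteratedDeriv hγ.1 ξ 3 s
  obtain ⟨hA1, hA2, hA3⟩ := hadm
  have h4 : ∀ s ∈ Icc (-1 : ℝ) 1, K / 2 ≤ G4 s := fun s hs => by
    have := hA2 s hs; simp only [hG4def]; linarith
  have h3I : ∀ s ∈ Icc (-δ₀) δ₀, |G3 s| ≤ 8 * δ₀ * K :=
    fun s hs => hA3 3 (by norm_num) (by norm_num) s hs
  have h2I : ∀ s ∈ Icc (-δ₀) δ₀, |G2 s| ≤ 8 * δ₀ * K :=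
    fun s hs => hA3 2 (by norm_num) (by norm_num) s hs
  have hδ1 : δ₀ ≤ 1/1000 := hδs
  have mono3 : ∀ a b : ℝ, -1 ≤ a → a ≤ b → b ≤ 1 → K / 2 * (b - a) ≤ G3 b - G3 a :=
    fun a b ha hab hb => slope_ge' hD3 hab
      (fun u hu => h4 u ⟨le_trans ha hu.1, le_trans hu.2 hb⟩)
  have hθ3' : G3 θ = 0 := hθ3
  -- θ is small
  have hθub : θ ≤ 17 * δ₀ := by
    by_contra h
    push_neg at h
    have hδθ : δ₀ ≤ θ := by linarith
    have hm := mono3 δ₀ θ (by linarith) hδθ hθmem.2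
    have h3δ := abs_le.mp (h3I δ₀ ⟨by linarith, le_refl _⟩)
    rw [hθ3'] at hm
    nlinarith [mul_pos hK (show (0:ℝ) < θ - 17 * δ₀ by linarith)]
  have hθlb : -(17 * δ₀) ≤ θ := by
    by_contra h
    push_neg at h
    have hθδ : θ ≤ -δ₀ := by linarith
    have hm := mono3 θ (-δ₀) hθmem.1 hθδ (by linarith)
    have h3δ := abs_le.mp (h3I (-δ₀) ⟨le_refl _, by linarith⟩)
    rw [hθ3'] at hm
    nlinarith [mul_pos hK (show (0:ℝ) < -θ - 17 * δ₀ by linarith)]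
  -- lower bound for G2 θ
  have hGθlb : -(9 * δ₀ * K) ≤ G2 θ := by
    rcases le_total 0 θ with h0θ | h0θ
    · have hbound : ∀ t ∈ Icc (0 : ℝ) θ, -(8 * δ₀ * K) ≤ G3 t := by
        intro t ht
        rcases le_total t δ₀ with h | h
        · have := abs_le.mp (h3I t ⟨by linarith [ht.1], h⟩); linarith [this.1]
        · have hm := mono3 δ₀ t (by linarith) h (le_trans ht.2 hθmem.2)
          have h3δ := abs_le.mp (h3I δ₀ ⟨by linarith, le_refl _⟩)
          nlinarith [mul_nonneg hK.le (sub_nonneg.mpr h)]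
      have hsl := slope_ge' hD2 h0θ hbound
      have h20 := abs_le.mp (h2I 0 ⟨by linarith, by linarith⟩)
      nlinarith [mul_nonneg (mul_nonneg hδ0.le hK.le) (show (0:ℝ) ≤ 1 - 8 * θ by linarith)]
    · have hbound : ∀ t ∈ Icc θ (0 : ℝ), G3 t ≤ 8 * δ₀ * K := by
        intro t ht
        rcases le_total (-δ₀) t with h | h
        · have := abs_le.mp (h3I t ⟨h, by linarith [ht.2]⟩); linarith [this.2]
        · have hm := mono3 t (-δ₀) (le_trans hθmem.1 ht.1) h (by linarith)
          have h3δ := abs_le.mp (h3I (-δ₀) ⟨le_refl _, by linarith⟩)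
          nlinarith [mul_nonneg hK.le (sub_nonneg.mpr h)]
      have hsl := slope_le' hD2 h0θ hbound
      have h20 := abs_le.mp (h2I 0 ⟨by linarith, by linarith⟩)
      nlinarith [mul_nonneg (mul_nonneg hδ0.le hK.le) (show (0:ℝ) ≤ 1 + 8 * θ by linarith)]
  -- quadratic lower bound
  have quad : ∀ s ∈ Icc (-1 : ℝ) 1, G2 θ + (K / 2) / 4 * (s - θ) ^ 2 ≤ G2 s :=
    quad_lower hD2 hD3 hθmem (by positivity) h4 hθ3'
  refine ⟨?_, ?_, ?_⟩
  · -- case u₂ > 0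
    intro hpos s hs h0
    have hq := quad s hs
    have : G2 s = 0 := h0
    nlinarith [mul_nonneg hK.le (sq_nonneg (s - θ))]
  · -- case u₂ = 0
    intro h0 s hs hs0
    have hq := quad s hs
    have hG2θ : G2 θ = 0 := h0
    have hG2s : G2 s = 0 := hs0
    have hsq : (s - θ) ^ 2 = 0 := by
      rcases eq_or_lt_of_le (sq_nonneg (s - θ)) with h | h
      · exact h.symm
      · nlinarith [mul_pos (show (0:ℝ) < K / 8 by linarith) h]
    have := pow_eq_zero_iff (n := 2) (by norm_num) |>.mp hsq
    linarith [sub_eq_zero.mp this]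
  · -- case u₂ < 0
    intro hneg
    have hG2θneg : G2 θ < 0 := hneg
    -- bounds for any root
    have rootBound : ∀ s ∈ Icc (-1 : ℝ) 1, G2 s = 0 → |s| ≤ 26 * Real.sqrt δ₀ := by
      intro s hs h0
      have hq := quad s hs
      have hKX : K * (s - θ) ^ 2 ≤ K * (72 * δ₀) := by linarith [hq, hGθlb, h0]
      have hX : (s - θ) ^ 2 ≤ 72 * δ₀ := le_of_mul_le_mul_left hKX hK
      have habs : |s - θ| ≤ Real.sqrt (81 * δ₀) := by
        rw [← Real.sqrt_sq_eq_abs]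
        exact Real.sqrt_le_sqrt (by linarith)
      have hsqrt81 : Real.sqrt (81 * δ₀) = 9 * Real.sqrt δ₀ := by
        rw [show (81 : ℝ) * δ₀ = (9 * Real.sqrt δ₀) ^ 2 by
          rw [mul_pow, Real.sq_sqrt hδ0.le]; norm_num]
        exact Real.sqrt_sq (by positivity)
      have hδsqrt : δ₀ ≤ Real.sqrt δ₀ := by
        nlinarith [Real.sq_sqrt hδ0.le, Real.sqrt_nonneg δ₀,
          sq_nonneg (Real.sqrt δ₀ - 1)]
      have h1 := abs_le.mp habs
      rw [hsqrt81] at h1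
      rw [abs_le]
      constructor <;> linarith [h1.1, h1.2, hδsqrt, hθub, hθlb]
    -- endpoints are positive
    have hG1pos : 0 < G2 1 := by
      have hq := quad 1 ⟨by norm_num, le_refl _⟩
      have e1 : (983 : ℝ)/1000 ≤ 1 - θ := by linarith
      have e2 : ((983:ℝ)/1000) * ((983:ℝ)/1000) ≤ (1 - θ) * (1 - θ) :=
        mul_le_mul e1 e1 (by norm_num) (by linarith)
      have e3 := mul_le_mul_of_nonneg_left e2 hK.le
      have e4 : δ₀ * K ≤ 1/1000 * K := mul_le_mul_of_nonneg_right hδ1 hK.le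
      nlinarith [hq, hGθlb, e3, e4, hK]
    have hGm1pos : 0 < G2 (-1) := by
      have hq := quad (-1) ⟨le_refl _, by norm_num⟩
      have e1 : (983 : ℝ)/1000 ≤ 1 + θ := by linarith
      have e2 : ((983:ℝ)/1000) * ((983:ℝ)/1000) ≤ (1 + θ) * (1 + θ) :=
        mul_le_mul e1 e1 (by norm_num) (by linarith)
      have e3 := mul_le_mul_of_nonneg_left e2 hK.le
      have e4 : δ₀ * K ≤ 1/1000 * K := mul_le_mul_of_nonneg_right hδ1 hK.le
      nlinarith [hq, hGθlb, e3, e4, hK]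
    have hθlt1 : θ < 1 := by linarith
    have hθgtm1 : (-1 : ℝ) < θ := by linarith
    have contG2 : Continuous G2 := continuous_iff_continuousAt.mpr fun s => (hD2 s).continuousAt
    -- find the two roots by IVT
    obtain ⟨s₂, hs₂mem, hs₂⟩ : ∃ s₂ ∈ Icc θ 1, G2 s₂ = 0 := by
      have := intermediate_value_Icc hθlt1.le contG2.continuousOn
        (show (0:ℝ) ∈ Icc (G2 θ) (G2 1) from ⟨hG2θneg.le, hG1pos.le⟩)
      obtain ⟨x, hx, hx0⟩ := this
      exact ⟨x, hx, hx0⟩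
    obtain ⟨s₁, hs₁mem, hs₁⟩ : ∃ s₁ ∈ Icc (-1 : ℝ) θ, G2 s₁ = 0 := by
      have := intermediate_value_Icc' hθgtm1.le contG2.continuousOn
        (show (0:ℝ) ∈ Icc (G2 θ) (G2 (-1)) from ⟨hG2θneg.le, hGm1pos.le⟩)
      obtain ⟨x, hx, hx0⟩ := this
      exact ⟨x, hx, hx0⟩
    have hs₁lt : s₁ < θ := lt_of_le_of_ne hs₁mem.2 (fun h => by rw [h] at hs₁; linarith)
    have hs₂gt : θ < s₂ := lt_of_le_of_ne hs₂mem.1 (fun h => by rw [← h] at hs₂; linarith)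
    have hs₁mem' : s₁ ∈ Icc (-1 : ℝ) 1 := ⟨hs₁mem.1, le_trans hs₁mem.2 hθmem.2⟩
    have hs₂mem' : s₂ ∈ Icc (-1 : ℝ) 1 := ⟨le_trans hθmem.1 hs₂mem.1, hs₂mem.2⟩
    -- strict monotonicity on each side
    have hmonoR : ∀ a b : ℝ, θ < a → a < b → b ≤ 1 → G2 a < G2 b := by
      intro a b ha hab hb
      have key : ∀ t ∈ Icc a b, K / 2 * (a - θ) ≤ G3 t := by
        intro t ht
        have hm := mono3 θ t hθmem.1 (by linarith [ht.1]) (le_trans ht.2 hb)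
        rw [hθ3'] at hm
        nlinarith [mul_nonneg hK.le (sub_nonneg.mpr (le_trans ha.le ht.1)),
          mul_nonneg hK.le (sub_nonneg.mpr ht.1)]
      have := slope_ge' hD2 hab.le key
      nlinarith [mul_pos (mul_pos (half_pos hK) (sub_pos.mpr ha)) (sub_pos.mpr hab)]
    have hmonoL : ∀ a b : ℝ, -1 ≤ a → a < b → b < θ → G2 b < G2 a := by
      intro a b ha hab hb
      have key : ∀ t ∈ Icc a b, G3 t ≤ -(K / 2 * (θ - b)) := by
        intro t ht
        have hm := mono3 t θ (le_trans ha ht.1) (by linarith [ht.2]) hθmem.2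
        rw [hθ3'] at hm
        nlinarith [mul_nonneg hK.le (sub_nonneg.mpr ht.2)]
      have := slope_le' hD2 hab.le key
      nlinarith [mul_pos (mul_pos (half_pos hK) (sub_pos.mpr hb)) (sub_pos.mpr hab)]
    refine ⟨s₁, s₂, hs₁mem', hs₂mem', by linarith, hs₁, hs₂,
      rootBound s₁ hs₁mem' hs₁, rootBound s₂ hs₂mem' hs₂, ?_⟩
    intro s hs h0
    have hG2s : G2 s = 0 := h0
    rcases lt_trichotomy s θ with hlt | heq | hgt
    · left
      rcases lt_trichotomy s s₁ with h | h | h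
      · exfalso; have := hmonoL s s₁ hs.1 h hs₁lt; rw [hs₁, hG2s] at this; linarith
      · exact h
      · exfalso; have := hmonoL s₁ s hs₁mem.1 h hlt; rw [hs₁, hG2s] at this; linarith
    · exfalso; rw [heq] at hG2s; linarith
    · right
      rcases lt_trichotomy s s₂ with h | h | h
      · exfalso; have := hmonoR s s₂ hgt h hs₂mem.2; rw [hs₂, hG2s] at this; linarith
      · exact h
      · exfalso; have := hmonoR s₂ s hs₂gt h hs.2; rw [hs₂, hG2s] at this; linarith
end
end

section
/- Let n ≥ 1, Ω ⊆ ℝⁿ open, I ⊆ ℝ an open interval, g, h : I → ℝⁿ smooth, y : Ω → I smooth with ⟨g(y(x)), x⟩ = 0 for all x ∈ Ω, and let e ∈ ℝⁿ be a unit vector; write ∇_e for the directional derivative along e in the variable x ∈ Ω. Suppose A, B, M₁, M₂ > 0 and constants (c_N)_{N ≥ 0} are such that for all x ∈ Ω: |⟨g'(y(x)), x⟩| ≥ A M₂; |⟨g^{(N)}(y(x)), x⟩| ≤ c_N A M₂^N and |⟨h^{(N)}(y(x)), x⟩| ≤ c_N B M₂^N for all N ≥ 1; and |⟨g^{(N)}(y(x)),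 e⟩| ≤ c_N A M₁ M₂^N and |⟨h^{(N)}(y(x)), e⟩| ≤ c_N B M₁ M₂^N for all N ≥ 0. Then for each N ≥ 1 there is a constant C_N, depending only on N and finitely many of the c_j, such that for all x ∈ Ω: |∇_e^N y(x)| ≤ C_N M₁^N M₂^{−1} and |∇_e^N ⟨h(y(x)), x⟩| ≤ C_N B M₁^N. -/
open MeasureTheory Set
open scoped InnerProductSpace ENNReal

noncomputable section

/-- The `N`-fold iterated directional derivative `∇_e^N` along `e`. -/
def dirIter {n : ℕ} (e : Euc n) (N : ℕ) (F : Euc n → ℝ) : Euc n → ℝ :=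
  (fun G : Euc n → ℝ => fun x => fderiv ℝ G x e)^[N] F

namespace St17

inductive Expr : Type
  | u : ℕ → Expr
  | g : ℕ → Expr
  | v : ℕ → Expr
  | h : ℕ → Expr
  | inv1 : Expr
  | neg : Expr → Expr
  | add : Expr → Expr → Expr
  | mul : Expr → Expr → Expr

/-- Expression for `∇ₑ y`. -/
def Ey : Expr := .neg (.mul (.u 0) .inv1)

/-- Formal directional derivative. -/
def D : Expr → Expr
  | .u K => .mul (.u (K+1)) Ey
  | .g K => .add (.mul (.g (K+1)) Ey) (.u K)
  | .v K => .mul (.v (K+1)) Ey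
  | .h K => .add (.mul (.h (K+1)) Ey) (.v K)
  | .inv1 => .neg (.mul (.add (.mul (.g 2) Ey) (.u 1)) (.mul .inv1 .inv1))
  | .neg E => .neg (D E)
  | .add E F => .add (D E) (D F)
  | .mul E F => .add (.mul (D E) F) (.mul E (D F))

noncomputable def eval {X : Type*} (U G V H : ℕ → X → ℝ) : Expr → X → ℝ
  | .u K => U K
  | .g K => G K
  | .v K => V K
  | .h K => H K
  | .inv1 => fun x => (G 1 x)⁻¹
  | .neg E => fun x => -(eval U G V H E x)
  | .add E F => fun x => eval U G V H E x + eval U G V H F x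
  | .mul E F => fun x => eval U G V H E x * eval U G V H F x

def wa : Expr → ℤ
  | .u _ => 1
  | .g _ => 1
  | .v _ => 0
  | .h _ => 0
  | .inv1 => -1
  | .neg E => wa E
  | .add E _ => wa E
  | .mul E F => wa E + wa F

def wb : Expr → ℤ
  | .u _ => 0
  | .g _ => 0
  | .v _ => 1
  | .h _ => 1
  | .inv1 => 0
  | .neg E => wb E
  | .add E _ => wb E
  | .mul E F => wb E + wb F

def wp : Expr → ℤ
  | .u _ => 1
  | .g _ => 0
  | .v _ => 1
  | .h _ => 0
  | .inv1 => 0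
  | .neg E => wp E
  | .add E _ => wp E
  | .mul E F => wp E + wp F

def wq : Expr → ℤ
  | .u K => K
  | .g K => K
  | .v K => K
  | .h K => K
  | .inv1 => -1
  | .neg E => wq E
  | .add E _ => wq E
  | .mul E F => wq E + wq F

def Bnd (c : ℕ → ℝ) : Expr → ℝ
  | .u K => max (c K) 0
  | .g K => max (c K) 0
  | .v K => max (c K) 0
  | .h K => max (c K) 0
  | .inv1 => 1
  | .neg E => Bnd c E
  | .add E F => Bnd c E + Bnd c F
  | .mul E F => Bnd c E * Bnd c F

def OK : Expr → Prop
  | .u _ => True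
  | .g K => 1 ≤ K
  | .v _ => True
  | .h K => 1 ≤ K
  | .inv1 => True
  | .neg E => OK E
  | .add E F => OK E ∧ OK F ∧ wa E = wa F ∧ wb E = wb F ∧ wp E = wp F ∧ wq E = wq F
  | .mul E F => OK E ∧ OK F

lemma Bnd_nonneg (c : ℕ → ℝ) : ∀ E, 0 ≤ Bnd c E := by
  intro E
  induction E with
  | u K => simp [Bnd]
  | g K => simp [Bnd]
  | v K => simp [Bnd]
  | h K => simp [Bnd]
  | inv1 => norm_num [Bnd]
  | neg E ih => simpa [Bnd] using ih
  | add E F ihE ihF => simp only [Bnd]; linarith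
  | mul E F ihE ihF => simp only [Bnd]; positivity

lemma okEy : OK Ey ∧ wa Ey = 0 ∧ wb Ey = 0 ∧ wp Ey = 1 ∧ wq Ey = -1 := by
  refine ⟨?_, ?_, ?_, ?_, ?_⟩ <;> simp [Ey, OK, wa, wb, wp, wq]

lemma wa_D : ∀ E, wa (D E) = wa E := by
  intro E
  induction E <;> simp only [D, Ey, wa] <;> omega

lemma wb_D : ∀ E, wb (D E) = wb E := by
  intro E
  induction E <;> simp only [D, Ey, wb] <;> omega

lemma wp_D : ∀ E, wp (D E) = wp E + 1 := by
  intro E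
  induction E <;> simp only [D, Ey, wp] <;> omega

lemma wq_D : ∀ E, wq (D E) = wq E := by
  intro E
  induction E <;> simp only [D, Ey, wq] <;> omega

lemma OK_D : ∀ E, OK E → OK (D E) := by
  intro E
  induction E with
  | u K => intro _; simp [D, Ey, OK, wa, wb, wp, wq] <;> omega
  | g K => intro _; simp [D, Ey, OK, wa, wb, wp, wq] <;> omega
  | v K => intro _; simp [D, Ey, OK, wa, wb, wp, wq] <;> omega
  | h K => intro _; simp [D, Ey, OK, wa, wb, wp, wq] <;> omega
  | inv1 => intro _; simp [D, Ey, OK, wa, wb, wp, wq] <;> omega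
  | neg E ih => intro hE; simp only [D, OK] at *; exact ih hE
  | add E F ihE ihF =>
      rintro ⟨hE, hF, e1, e2, e3, e4⟩
      simp only [D, OK]
      exact ⟨ihE hE, ihF hF, by rw [wa_D, wa_D, e1], by rw [wb_D, wb_D, e2],
        by rw [wp_D, wp_D, e3], by rw [wq_D, wq_D, e4]⟩
  | mul E F ihE ihF =>
      rintro ⟨hE, hF⟩
      simp only [D, OK, wa, wb, wp, wq]
      refine ⟨⟨ihE hE, hF⟩, ⟨hE, ihF hF⟩, ?_, ?_, ?_, ?_⟩ <;>
        simp [wa_D, wb_D, wp_D, wq_D] <;> ring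

lemma D_ok (E : Expr) (hE : OK E) : OK (D E) ∧ wa (D E) = wa E ∧ wb (D E) = wb E ∧
    wp (D E) = wp E + 1 ∧ wq (D E) = wq E :=
  ⟨OK_D E hE, wa_D E, wb_D E, wp_D E, wq_D E⟩

lemma D_iter_ok (E : Expr) (hE : OK E) : ∀ m : ℕ, OK (D^[m] E) ∧ wa (D^[m] E) = wa E ∧
    wb (D^[m] E) = wb E ∧ wp (D^[m] E) = wp E + m ∧ wq (D^[m] E) = wq E := by
  intro m
  induction m with
  | zero => simpa using hE
  | succ m ih =>
      obtain ⟨o, a, b, p, q⟩ := ih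
      obtain ⟨o', a', b', p', q'⟩ := D_ok _ o
      rw [Function.iterate_succ_apply']
      exact ⟨o', by omega, by omega, by push_cast; omega, by omega⟩

variable {n : ℕ}

lemma itDeriv_hasDerivAt {g : ℝ → Euc n} {c₁ c₂ : ℝ}
    (hg : ContDiffOn ℝ (⊤ : ℕ∞) g (Set.Ioo c₁ c₂)) {t : ℝ} (ht : t ∈ Set.Ioo c₁ c₂) (K : ℕ) :
    HasDerivAt (iteratedDerivWithin K g (Set.Ioo c₁ c₂))
      (iteratedDerivWithin (K + 1) g (Set.Ioo c₁ c₂) t) t := by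
  have hd : DifferentiableOn ℝ (iteratedDerivWithin K g (Set.Ioo c₁ c₂)) (Set.Ioo c₁ c₂) :=
    hg.differentiableOn_iteratedDerivWithin (by exact_mod_cast WithTop.coe_lt_top (K : ℕ))
      (uniqueDiffOn_Ioo c₁ c₂)
  have hdx : DifferentiableAt ℝ (iteratedDerivWithin K g (Set.Ioo c₁ c₂)) t :=
    (hd t ht).differentiableAt (isOpen_Ioo.mem_nhds ht)
  have h1 := hdx.hasDerivAt
  rwa [← derivWithin_of_isOpen isOpen_Ioo ht,
    ← iteratedDerivWithin_succ] at h1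

lemma y_hasFDerivAt {Ω : Set (Euc n)} (hΩ : IsOpen Ω) {y : Euc n → ℝ}
    (hy : ContDiffOn ℝ (⊤ : ℕ∞) y Ω) {x : Euc n} (hx : x ∈ Ω) :
    HasFDerivAt y (fderiv ℝ y x) x :=
  ((hy.contDiffAt (hΩ.mem_nhds hx)).differentiableAt (by simp)).hasFDerivAt

lemma pair_e_hasFDerivAt {Ω : Set (Euc n)} (hΩ : IsOpen Ω) {c₁ c₂ : ℝ} {g : ℝ → Euc n}
    (hg : ContDiffOn ℝ (⊤ : ℕ∞) g (Set.Ioo c₁ c₂)) {y : Euc n → ℝ}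
    (hy : ContDiffOn ℝ (⊤ : ℕ∞) y Ω) (hmem : ∀ x ∈ Ω, y x ∈ Set.Ioo c₁ c₂)
    (e : Euc n) {x : Euc n} (hx : x ∈ Ω) (K : ℕ) :
    ∃ L : Euc n →L[ℝ] ℝ,
      HasFDerivAt (fun x' => ⟪iteratedDerivWithin K g (Set.Ioo c₁ c₂) (y x'), e⟫_ℝ) L x ∧
      L e = ⟪iteratedDerivWithin (K + 1) g (Set.Ioo c₁ c₂) (y x), e⟫_ℝ * fderiv ℝ y x e := by
  have hy' := y_hasFDerivAt hΩ hy hx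
  have hφ := itDeriv_hasDerivAt hg (hmem x hx) K
  have hcomp := (hφ.hasFDerivAt).comp x hy'
  refine ⟨_, (HasFDerivAt.inner ℝ hcomp (hasFDerivAt_const e x)), ?_⟩
  simp [real_inner_smul_left, real_inner_smul_right, real_inner_comm, Finset.sum_mul, Finset.mul_sum,
    mul_comm, mul_assoc, mul_left_comm]

lemma pair_x_hasFDerivAt {Ω : Set (Euc n)} (hΩ : IsOpen Ω) {c₁ c₂ : ℝ} {g : ℝ → Euc n}
    (hg : ContDiffOn ℝ (⊤ : ℕ∞) g (Set.Ioo c₁ c₂)) {y : Euc n → ℝ}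
    (hy : ContDiffOn ℝ (⊤ : ℕ∞) y Ω) (hmem : ∀ x ∈ Ω, y x ∈ Set.Ioo c₁ c₂)
    (e : Euc n) {x : Euc n} (hx : x ∈ Ω) (K : ℕ) :
    ∃ L : Euc n →L[ℝ] ℝ,
      HasFDerivAt (fun x' => ⟪iteratedDerivWithin K g (Set.Ioo c₁ c₂) (y x'), x'⟫_ℝ) L x ∧
      L e = ⟪iteratedDerivWithin (K + 1) g (Set.Ioo c₁ c₂) (y x), x⟫_ℝ * fderiv ℝ y x e +
        ⟪iteratedDerivWithin K g (Set.Ioo c₁ c₂) (y x), e⟫_ℝ := by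
  have hy' := y_hasFDerivAt hΩ hy hx
  have hφ := itDeriv_hasDerivAt hg (hmem x hx) K
  have hcomp := (hφ.hasFDerivAt).comp x hy'
  refine ⟨_, (HasFDerivAt.inner ℝ hcomp (hasFDerivAt_id x)), ?_⟩
  simp [real_inner_smul_left, real_inner_smul_right, real_inner_comm, Finset.sum_mul, Finset.mul_sum,
    mul_comm, mul_assoc, mul_left_comm, add_comm]

lemma hyde_raw {Ω : Set (Euc n)} (hΩ : IsOpen Ω) {c₁ c₂ : ℝ} {g : ℝ → Euc n}
    (hg : ContDiffOn ℝ (⊤ : ℕ∞) g (Set.Ioo c₁ c₂)) {y : Euc n → ℝ}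
    (hy : ContDiffOn ℝ (⊤ : ℕ∞) y Ω) (hmem : ∀ x ∈ Ω, y x ∈ Set.Ioo c₁ c₂)
    (horth : ∀ x ∈ Ω, ⟪g (y x), x⟫_ℝ = 0)
    (e : Euc n) {x : Euc n} (hx : x ∈ Ω)
    (hne : ⟪iteratedDerivWithin 1 g (Set.Ioo c₁ c₂) (y x), x⟫_ℝ ≠ 0) :
    fderiv ℝ y x e = -(⟪iteratedDerivWithin 0 g (Set.Ioo c₁ c₂) (y x), e⟫_ℝ *
      (⟪iteratedDerivWithin 1 g (Set.Ioo c₁ c₂) (y x), x⟫_ℝ)⁻¹) := by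
  obtain ⟨L, hL, hLe⟩ := pair_x_hasFDerivAt hΩ hg hy hmem e hx 0
  have hF0 : ∀ z ∈ Ω, (fun x' => ⟪iteratedDerivWithin 0 g (Set.Ioo c₁ c₂) (y x'), x'⟫_ℝ) z = 0 := by
    intro z hz
    simpa [iteratedDerivWithin_zero] using horth z hz
  have hev : (fun x' => ⟪iteratedDerivWithin 0 g (Set.Ioo c₁ c₂) (y x'), x'⟫_ℝ) =ᶠ[nhds x]
      (fun _ => (0 : ℝ)) := Filter.eventuallyEq_of_mem (hΩ.mem_nhds hx) hF0
  have hzero : L = 0 := by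
    rw [← hL.fderiv, hev.fderiv_eq, fderiv_fun_const]
    rfl
  have h0 : ⟪iteratedDerivWithin 1 g (Set.Ioo c₁ c₂) (y x), x⟫_ℝ * fderiv ℝ y x e +
      ⟪iteratedDerivWithin 0 g (Set.Ioo c₁ c₂) (y x), e⟫_ℝ = 0 := by
    have := hLe
    rw [hzero] at this
    simpa [mul_comm] using this.symm
  have h1 : fderiv ℝ y x e = -⟪iteratedDerivWithin 0 g (Set.Ioo c₁ c₂) (y x), e⟫_ℝ /
      ⟪iteratedDerivWithin 1 g (Set.Ioo c₁ c₂) (y x), x⟫_ℝ := by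
    rw [eq_div_iff hne]
    linarith [h0]
  rw [h1]
  ring

lemma inv_hasFDerivAt {Ω : Set (Euc n)} (hΩ : IsOpen Ω) {c₁ c₂ : ℝ} {g : ℝ → Euc n}
    (hg : ContDiffOn ℝ (⊤ : ℕ∞) g (Set.Ioo c₁ c₂)) {y : Euc n → ℝ}
    (hy : ContDiffOn ℝ (⊤ : ℕ∞) y Ω) (hmem : ∀ x ∈ Ω, y x ∈ Set.Ioo c₁ c₂)
    (e : Euc n) {x : Euc n} (hx : x ∈ Ω)
    (hne : ⟪iteratedDerivWithin 1 g (Set.Ioo c₁ c₂) (y x), x⟫_ℝ ≠ 0) :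
    ∃ L : Euc n →L[ℝ] ℝ,
      HasFDerivAt (fun x' => (⟪iteratedDerivWithin 1 g (Set.Ioo c₁ c₂) (y x'), x'⟫_ℝ)⁻¹) L x ∧
      L e = -((⟪iteratedDerivWithin 2 g (Set.Ioo c₁ c₂) (y x), x⟫_ℝ * fderiv ℝ y x e +
          ⟪iteratedDerivWithin 1 g (Set.Ioo c₁ c₂) (y x), e⟫_ℝ) *
        ((⟪iteratedDerivWithin 1 g (Set.Ioo c₁ c₂) (y x), x⟫_ℝ)⁻¹ *
         (⟪iteratedDerivWithin 1 g (Set.Ioo c₁ c₂) (y x), x⟫_ℝ)⁻¹)) := by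
  obtain ⟨L1, hL1, hL1e⟩ := pair_x_hasFDerivAt hΩ hg hy hmem e hx 1
  have hcomp := HasDerivAt.comp_hasFDerivAt
    (f := fun x' => ⟪iteratedDerivWithin 1 g (Set.Ioo c₁ c₂) (y x'), x'⟫_ℝ)
    x (hasDerivAt_inv hne) hL1
  refine ⟨_, hcomp, ?_⟩
  have h2 : (2 : ℕ) = 1 + 1 := rfl
  rw [h2]
  simp only [ContinuousLinearMap.smul_apply, smul_eq_mul, hL1e]
  rw [sq, mul_inv]
  ring

def evx (g h : ℝ → Euc n) (c₁ c₂ : ℝ) (y : Euc n → ℝ) (e : Euc n) : Expr → Euc n → ℝ :=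
  eval (fun K x => ⟪iteratedDerivWithin K g (Set.Ioo c₁ c₂) (y x), e⟫_ℝ)
       (fun K x => ⟪iteratedDerivWithin K g (Set.Ioo c₁ c₂) (y x), x⟫_ℝ)
       (fun K x => ⟪iteratedDerivWithin K h (Set.Ioo c₁ c₂) (y x), e⟫_ℝ)
       (fun K x => ⟪iteratedDerivWithin K h (Set.Ioo c₁ c₂) (y x), x⟫_ℝ)

lemma derivE {Ω : Set (Euc n)} (hΩ : IsOpen Ω) {c₁ c₂ : ℝ} {g h : ℝ → Euc n}
    (hg : ContDiffOn ℝ (⊤ : ℕ∞) g (Set.Ioo c₁ c₂))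
    (hh : ContDiffOn ℝ (⊤ : ℕ∞) h (Set.Ioo c₁ c₂)) {y : Euc n → ℝ}
    (hy : ContDiffOn ℝ (⊤ : ℕ∞) y Ω) (hmem : ∀ x ∈ Ω, y x ∈ Set.Ioo c₁ c₂)
    (horth : ∀ x ∈ Ω, ⟪g (y x), x⟫_ℝ = 0) (e : Euc n)
    (hne : ∀ x ∈ Ω, ⟪iteratedDerivWithin 1 g (Set.Ioo c₁ c₂) (y x), x⟫_ℝ ≠ 0) :
    ∀ E : Expr, ∀ x ∈ Ω, ∃ L : Euc n →L[ℝ] ℝ,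
      HasFDerivAt (evx g h c₁ c₂ y e E) L x ∧ L e = evx g h c₁ c₂ y e (D E) x := by
  intro E
  induction E with
  | u K =>
      intro x hx
      obtain ⟨L, hL, hLe⟩ := pair_e_hasFDerivAt hΩ hg hy hmem e hx K
      refine ⟨L, hL, ?_⟩
      rw [hLe, hyde_raw hΩ hg hy hmem horth e hx (hne x hx)]
      simp only [evx, eval, D, Ey]
  | g K =>
      intro x hx
      obtain ⟨L, hL, hLe⟩ := pair_x_hasFDerivAt hΩ hg hy hmem e hx K
      refine ⟨L, hL, ?_⟩
      rw [hLe, hyde_raw hΩ hg hy hmem horth e hx (hne x hx)]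
      simp only [evx, eval, D, Ey]
  | v K =>
      intro x hx
      obtain ⟨L, hL, hLe⟩ := pair_e_hasFDerivAt hΩ hh hy hmem e hx K
      refine ⟨L, hL, ?_⟩
      rw [hLe, hyde_raw hΩ hg hy hmem horth e hx (hne x hx)]
      simp only [evx, eval, D, Ey]
  | h K =>
      intro x hx
      obtain ⟨L, hL, hLe⟩ := pair_x_hasFDerivAt hΩ hh hy hmem e hx K
      refine ⟨L, hL, ?_⟩
      rw [hLe, hyde_raw hΩ hg hy hmem horth e hx (hne x hx)]
      simp only [evx, eval, D, Ey]
  | inv1 =>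
      intro x hx
      obtain ⟨L, hL, hLe⟩ := inv_hasFDerivAt hΩ hg hy hmem e hx (hne x hx)
      refine ⟨L, hL, ?_⟩
      rw [hLe, hyde_raw hΩ hg hy hmem horth e hx (hne x hx)]
      simp only [evx, eval, D, Ey]
  | neg E ih =>
      intro x hx
      obtain ⟨L, hL, hLe⟩ := ih x hx
      refine ⟨-L, hL.neg, ?_⟩
      simp only [evx, eval, D, ContinuousLinearMap.neg_apply] at *
      rw [hLe]
  | add E F ihE ihF =>
      intro x hx
      obtain ⟨L1, hL1, hL1e⟩ := ihE x hx
      obtain ⟨L2, hL2, hL2e⟩ := ihF x hx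
      refine ⟨L1 + L2, hL1.add hL2, ?_⟩
      simp only [evx, eval, D, ContinuousLinearMap.add_apply] at *
      rw [hL1e, hL2e]
  | mul E F ihE ihF =>
      intro x hx
      obtain ⟨L1, hL1, hL1e⟩ := ihE x hx
      obtain ⟨L2, hL2, hL2e⟩ := ihF x hx
      refine ⟨_, hL1.mul hL2, ?_⟩
      simp only [evx, eval, D, ContinuousLinearMap.add_apply, ContinuousLinearMap.smul_apply,
        smul_eq_mul] at *
      rw [hL1e, hL2e]
      ring

lemma okDh0 : OK (D (Expr.h 0)) ∧ wa (D (Expr.h 0)) = 0 ∧ wb (D (Expr.h 0)) = 1 ∧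
    wp (D (Expr.h 0)) = 1 ∧ wq (D (Expr.h 0)) = 0 := by
  refine ⟨?_, ?_, ?_, ?_, ?_⟩ <;> simp [D, Ey, OK, wa, wb, wp, wq]

lemma boundE {Ω : Set (Euc n)} {c₁ c₂ : ℝ} {g h : ℝ → Euc n} {y : Euc n → ℝ} {e : Euc n}
    (c : ℕ → ℝ) (A B M₁ M₂ : ℝ) (hA : 0 < A) (hB : 0 < B) (hM₁ : 0 < M₁) (hM₂ : 0 < M₂)
    (hlow : ∀ x ∈ Ω, A * M₂ ≤ |⟪iteratedDerivWithin 1 g (Set.Ioo c₁ c₂) (y x), x⟫_ℝ|)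
    (hgx : ∀ K : ℕ, 1 ≤ K → ∀ x ∈ Ω,
      |⟪iteratedDerivWithin K g (Set.Ioo c₁ c₂) (y x), x⟫_ℝ| ≤ c K * A * M₂ ^ K)
    (hhx : ∀ K : ℕ, 1 ≤ K → ∀ x ∈ Ω,
      |⟪iteratedDerivWithin K h (Set.Ioo c₁ c₂) (y x), x⟫_ℝ| ≤ c K * B * M₂ ^ K)
    (hge : ∀ K : ℕ, ∀ x ∈ Ω,
      |⟪iteratedDerivWithin K g (Set.Ioo c₁ c₂) (y x), e⟫_ℝ| ≤ c K * A * M₁ * M₂ ^ K)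
    (hhe : ∀ K : ℕ, ∀ x ∈ Ω,
      |⟪iteratedDerivWithin K h (Set.Ioo c₁ c₂) (y x), e⟫_ℝ| ≤ c K * B * M₁ * M₂ ^ K) :
    ∀ E : Expr, OK E → ∀ x ∈ Ω, |evx g h c₁ c₂ y e E x| ≤
      Bnd c E * (A ^ wa E * B ^ wb E * M₁ ^ wp E * M₂ ^ wq E) := by
  intro E
  induction E with
  | u K =>
      intro _ x hx
      simp only [evx, eval, Bnd, wa, wb, wp, wq, zpow_one, zpow_zero, zpow_natCast, one_mul]
      calc |⟪iteratedDerivWithin K g (Set.Ioo c₁ c₂) (y x), e⟫_ℝ|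
          ≤ c K * A * M₁ * M₂ ^ K := hge K x hx
        _ ≤ max (c K) 0 * A * M₁ * M₂ ^ K := by
            have hck : c K ≤ max (c K) 0 := le_max_left _ _
            gcongr
        _ = max (c K) 0 * (A * 1 * M₁ * M₂ ^ K) := by ring
  | g K =>
      intro hK x hx
      simp only [OK] at hK
      simp only [evx, eval, Bnd, wa, wb, wp, wq, zpow_one, zpow_zero, zpow_natCast, one_mul]
      calc |⟪iteratedDerivWithin K g (Set.Ioo c₁ c₂) (y x), x⟫_ℝ|
          ≤ c K * A * M₂ ^ K := hgx K hK x hx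
        _ ≤ max (c K) 0 * A * M₂ ^ K := by
            have hck : c K ≤ max (c K) 0 := le_max_left _ _
            gcongr
        _ = max (c K) 0 * (A * 1 * 1 * M₂ ^ K) := by ring
  | v K =>
      intro _ x hx
      simp only [evx, eval, Bnd, wa, wb, wp, wq, zpow_one, zpow_zero, zpow_natCast, one_mul]
      calc |⟪iteratedDerivWithin K h (Set.Ioo c₁ c₂) (y x), e⟫_ℝ|
          ≤ c K * B * M₁ * M₂ ^ K := hhe K x hx
        _ ≤ max (c K) 0 * B * M₁ * M₂ ^ K := by
            have hck : c K ≤ max (c K) 0 := le_max_left _ _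
            gcongr
        _ = max (c K) 0 * (B * M₁ * M₂ ^ K) := by ring
  | h K =>
      intro hK x hx
      simp only [OK] at hK
      simp only [evx, eval, Bnd, wa, wb, wp, wq, zpow_one, zpow_zero, zpow_natCast, one_mul]
      calc |⟪iteratedDerivWithin K h (Set.Ioo c₁ c₂) (y x), x⟫_ℝ|
          ≤ c K * B * M₂ ^ K := hhx K hK x hx
        _ ≤ max (c K) 0 * B * M₂ ^ K := by
            have hck : c K ≤ max (c K) 0 := le_max_left _ _
            gcongr
        _ = max (c K) 0 * (B * 1 * M₂ ^ K) := by ring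
  | inv1 =>
      intro _ x hx
      simp only [evx, eval, Bnd, wa, wb, wp, wq, zpow_neg, zpow_one, zpow_zero, one_mul]
      rw [abs_inv]
      have h1 := hlow x hx
      have h2 : |⟪iteratedDerivWithin 1 g (Set.Ioo c₁ c₂) (y x), x⟫_ℝ|⁻¹ ≤ (A * M₂)⁻¹ := by
        apply inv_anti₀ (mul_pos hA hM₂) h1
      calc |⟪iteratedDerivWithin 1 g (Set.Ioo c₁ c₂) (y x), x⟫_ℝ|⁻¹ ≤ (A * M₂)⁻¹ := h2
        _ = A⁻¹ * 1 * 1 * M₂⁻¹ := by rw [mul_inv]; ring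
  | neg E ih =>
      intro hE x hx
      simp only [OK] at hE
      simp only [evx, eval, Bnd, wa, wb, wp, wq, abs_neg] at *
      exact ih hE x hx
  | add E F ihE ihF =>
      rintro ⟨hE, hF, e1, e2, e3, e4⟩ x hx
      have b1 := ihE hE x hx
      have b2 := ihF hF x hx
      simp only [evx, eval, Bnd, wa, wb, wp, wq] at *
      rw [← e1, ← e2, ← e3, ← e4] at b2
      calc |_ + _| ≤ _ := abs_add_le _ _
        _ ≤ Bnd c E * (A ^ wa E * B ^ wb E * M₁ ^ wp E * M₂ ^ wq E) +
            Bnd c F * (A ^ wa E * B ^ wb E * M₁ ^ wp E * M₂ ^ wq E) := add_le_add b1 b2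
        _ = (Bnd c E + Bnd c F) * (A ^ wa E * B ^ wb E * M₁ ^ wp E * M₂ ^ wq E) := by ring
  | mul E F ihE ihF =>
      rintro ⟨hE, hF⟩ x hx
      have b1 := ihE hE x hx
      have b2 := ihF hF x hx
      have hw1 : (0:ℝ) ≤ A ^ wa F * B ^ wb F * M₁ ^ wp F * M₂ ^ wq F := by positivity
      have habs := abs_nonneg (evx g h c₁ c₂ y e E x)
      have hbb : (0:ℝ) ≤ Bnd c F * (A ^ wa F * B ^ wb F * M₁ ^ wp F * M₂ ^ wq F) :=
        mul_nonneg (Bnd_nonneg c F) hw1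
      simp only [evx, eval, Bnd, wa, wb, wp, wq] at *
      calc |_ * _| = _ := abs_mul _ _
        _ ≤ (Bnd c E * (A ^ wa E * B ^ wb E * M₁ ^ wp E * M₂ ^ wq E)) *
            (Bnd c F * (A ^ wa F * B ^ wb F * M₁ ^ wp F * M₂ ^ wq F)) :=
          mul_le_mul b1 b2 (abs_nonneg _) (le_trans habs b1)
        _ = (Bnd c E * Bnd c F) * (A ^ (wa E + wa F) * B ^ (wb E + wb F) * M₁ ^ (wp E + wp F) *
            M₂ ^ (wq E + wq F)) := by
          rw [zpow_add₀ hA.ne', zpow_add₀ hB.ne', zpow_add₀ hM₁.ne', zpow_add₀ hM₂.ne']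
          ring

end St17

/-- derivative bounds for implicitly defined functions
(Lemma B.1 of the paper). -/
theorem statement17 (n : ℕ) (hn : 1 ≤ n) (c : ℕ → ℝ) (N : ℕ) (hN : 1 ≤ N) :
    ∃ C : ℝ, 0 < C ∧
    ∀ (Ω : Set (Euc n)), IsOpen Ω →
    ∀ c₁ c₂ : ℝ,
    ∀ g h : ℝ → Euc n,
      ContDiffOn ℝ (⊤ : ℕ∞) g (Set.Ioo c₁ c₂) →
      ContDiffOn ℝ (⊤ : ℕ∞) h (Set.Ioo c₁ c₂) →
    ∀ y : Euc n → ℝ, ContDiffOn ℝ (⊤ : ℕ∞) y Ω → (∀ x ∈ Ω, y x ∈ Set.Ioo c₁ c₂) →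
      (∀ x ∈ Ω, ⟪g (y x), x⟫_ℝ = 0) →
    ∀ e : Euc n, ‖e‖ = 1 →
    ∀ A B M₁ M₂ : ℝ, 0 < A → 0 < B → 0 < M₁ → 0 < M₂ →
      (∀ x ∈ Ω, A * M₂ ≤ |⟪iteratedDerivWithin 1 g (Set.Ioo c₁ c₂) (y x), x⟫_ℝ|) →
      (∀ K : ℕ, 1 ≤ K → ∀ x ∈ Ω,
        |⟪iteratedDerivWithin K g (Set.Ioo c₁ c₂) (y x), x⟫_ℝ| ≤ c K * A * M₂ ^ K) →
      (∀ K : ℕ, 1 ≤ K → ∀ x ∈ Ω,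
        |⟪iteratedDerivWithin K h (Set.Ioo c₁ c₂) (y x), x⟫_ℝ| ≤ c K * B * M₂ ^ K) →
      (∀ K : ℕ, ∀ x ∈ Ω,
        |⟪iteratedDerivWithin K g (Set.Ioo c₁ c₂) (y x), e⟫_ℝ| ≤ c K * A * M₁ * M₂ ^ K) →
      (∀ K : ℕ, ∀ x ∈ Ω,
        |⟪iteratedDerivWithin K h (Set.Ioo c₁ c₂) (y x), e⟫_ℝ| ≤ c K * B * M₁ * M₂ ^ K) →
    ∀ x ∈ Ω,
      |dirIter e N y x| ≤ C * M₁ ^ N * M₂⁻¹ ∧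
      |dirIter e N (fun x' => ⟪h (y x'), x'⟫_ℝ) x| ≤ C * B * M₁ ^ N := by
  refine ⟨max (max (St17.Bnd c (St17.D^[N - 1] St17.Ey))
      (St17.Bnd c (St17.D^[N] (St17.Expr.h 0)))) 1,
    lt_of_lt_of_le one_pos (le_max_right _ _), ?_⟩
  intro Ω hΩ c₁ c₂ g h hg hh y hy hmem horth e he A B M₁ M₂ hA hB hM₁ hM₂ hlow hgx hhx hge hhe x hx
  have hne : ∀ z ∈ Ω, ⟪iteratedDerivWithin 1 g (Set.Ioo c₁ c₂) (y z), z⟫_ℝ ≠ 0 := by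
    intro z hz h0
    have h1 := hlow z hz
    have hpos : 0 < A * M₂ := mul_pos hA hM₂
    rw [h0, abs_zero] at h1
    linarith
  have hD := St17.derivE hΩ hg hh hy hmem horth e hne
  have stepEq : ∀ (E : St17.Expr) (F : Euc n → ℝ),
      (∀ z ∈ Ω, F z = St17.evx g h c₁ c₂ y e E z) →
      ∀ z ∈ Ω, fderiv ℝ F z e = St17.evx g h c₁ c₂ y e (St17.D E) z := by
    intro E F hF z hz
    obtain ⟨L, hL, hLe⟩ := hD E z hz
    have heq : F =ᶠ[nhds z] St17.evx g h c₁ c₂ y e E :=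
      Filter.eventuallyEq_of_mem (hΩ.mem_nhds hz) hF
    rw [heq.fderiv_eq, hL.fderiv, hLe]
  have main1 : ∀ m : ℕ, ∀ z ∈ Ω,
      dirIter e (m + 1) y z = St17.evx g h c₁ c₂ y e (St17.D^[m] St17.Ey) z := by
    intro m
    induction m with
    | zero =>
        intro z hz
        have h1 : dirIter e 1 y z = fderiv ℝ y z e := by simp [dirIter]
        rw [h1, Function.iterate_zero_apply,
          St17.hyde_raw hΩ hg hy hmem horth e hz (hne z hz)]
        simp [St17.evx, St17.eval, St17.Ey]
    | succ m ih =>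
        intro z hz
        have h1 : dirIter e (m + 1 + 1) y = fun w => fderiv ℝ (dirIter e (m + 1) y) w e := by
          unfold dirIter
          rw [Function.iterate_succ_apply']
        rw [h1, Function.iterate_succ_apply']
        exact stepEq _ _ ih z hz
  have main2 : ∀ m : ℕ, ∀ z ∈ Ω, dirIter e m (fun x' => ⟪h (y x'), x'⟫_ℝ) z =
      St17.evx g h c₁ c₂ y e (St17.D^[m] (St17.Expr.h 0)) z := by
    intro m
    induction m with
    | zero =>
        intro z hz
        simp [dirIter, St17.evx, St17.eval, iteratedDerivWithin_zero]
    | succ m ih =>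
        intro z hz
        have h1 : dirIter e (m + 1) (fun x' => ⟪h (y x'), x'⟫_ℝ) =
            fun w => fderiv ℝ (dirIter e m (fun x' => ⟪h (y x'), x'⟫_ℝ)) w e := by
          unfold dirIter
          rw [Function.iterate_succ_apply']
        rw [h1, Function.iterate_succ_apply']
        exact stepEq _ _ ih z hz
  have hN' : N - 1 + 1 = N := Nat.succ_pred_eq_of_pos hN
  constructor
  · -- first bound
    obtain ⟨oE, aE, bE, pE, qE⟩ := St17.D_iter_ok St17.Ey St17.okEy.1 (N - 1)
    have hb1 := St17.boundE c A B M₁ M₂ hA hB hM₁ hM₂ hlow hgx hhx hge hhe _ oE x hx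
    rw [aE, bE, pE, qE, St17.okEy.2.1, St17.okEy.2.2.1, St17.okEy.2.2.2.1,
      St17.okEy.2.2.2.2] at hb1
    have hcast : (1 : ℤ) + ((N - 1 : ℕ) : ℤ) = (N : ℤ) := by omega
    rw [hcast] at hb1
    simp only [zpow_zero, zpow_natCast, zpow_neg, zpow_one, one_mul] at hb1
    have e1 := main1 (N - 1) x hx
    rw [hN'] at e1
    rw [e1]
    have hC : St17.Bnd c (St17.D^[N - 1] St17.Ey) ≤
        max (max (St17.Bnd c (St17.D^[N - 1] St17.Ey))
          (St17.Bnd c (St17.D^[N] (St17.Expr.h 0)))) 1 :=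
      le_trans (le_max_left _ _) (le_max_left _ _)
    calc |St17.evx g h c₁ c₂ y e (St17.D^[N - 1] St17.Ey) x|
        ≤ St17.Bnd c (St17.D^[N - 1] St17.Ey) * (M₁ ^ N * M₂⁻¹) := hb1
      _ ≤ max (max (St17.Bnd c (St17.D^[N - 1] St17.Ey))
            (St17.Bnd c (St17.D^[N] (St17.Expr.h 0)))) 1 * (M₁ ^ N * M₂⁻¹) := by
          apply mul_le_mul_of_nonneg_right hC
          positivity
      _ = _ := by ring
  · -- second bound
    have hsplit : St17.D^[N] (St17.Expr.h 0) = St17.D^[N - 1] (St17.D (St17.Expr.h 0)) := by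
      conv_lhs => rw [← hN']
      rw [Function.iterate_succ_apply]
    obtain ⟨oF, aF, bF, pF, qF⟩ := St17.D_iter_ok _ St17.okDh0.1 (N - 1)
    have hb2 := St17.boundE c A B M₁ M₂ hA hB hM₁ hM₂ hlow hgx hhx hge hhe _ oF x hx
    rw [aF, bF, pF, qF, St17.okDh0.2.1, St17.okDh0.2.2.1, St17.okDh0.2.2.2.1,
      St17.okDh0.2.2.2.2] at hb2
    have hcast : (1 : ℤ) + ((N - 1 : ℕ) : ℤ) = (N : ℤ) := by omega
    rw [hcast] at hb2
    simp only [zpow_zero, zpow_natCast, zpow_one, one_mul, mul_one] at hb2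
    have e2 := main2 N x hx
    rw [hsplit] at e2
    rw [e2]
    have hC : St17.Bnd c (St17.D^[N - 1] (St17.D (St17.Expr.h 0))) ≤
        max (max (St17.Bnd c (St17.D^[N - 1] St17.Ey))
          (St17.Bnd c (St17.D^[N] (St17.Expr.h 0)))) 1 := by
      rw [← hsplit]
      exact le_trans (le_max_right _ _) (le_max_left _ _)
    calc |St17.evx g h c₁ c₂ y e (St17.D^[N - 1] (St17.D (St17.Expr.h 0))) x|
        ≤ St17.Bnd c (St17.D^[N - 1] (St17.D (St17.Expr.h 0))) * (B * M₁ ^ N) := hb2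
      _ ≤ max (max (St17.Bnd c (St17.D^[N - 1] St17.Ey))
            (St17.Bnd c (St17.D^[N] (St17.Expr.h 0)))) 1 * (B * M₁ ^ N) := by
          apply mul_le_mul_of_nonneg_right hC
          positivity
      _ = _ := by ring
end
end
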